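/- arXiv:2212.00701 — 3 statements merged into one kernel-verified Lean document; each statement's English description precedes it below -/
import Mathlib

section
/- If G is a ring of k ≥ 2 diamonds (so n(G) = 4k), then the loop zero forcing number and the zero forcing number of G are equal and both equal n(G)/4 + 2. -/
open SimpleGraph

variable {V : Type*}

/-- The set of vertices eventually colored blue when the vertices of `S` are initially
colored blue and the standard zero forcing color change rule is iterated. -/
inductive ZeroForce (G : SimpleGraph V) (S : Set V) : V → Prop
  | init (v : V) (h : v ∈ S) : ZeroForce G S v
  | force (v w : V) (hv : ZeroForce G S v) (hadj : G.Adj v w)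
      (h : ∀ u, G.Adj v u → u ≠ w → ZeroForce G S u) : ZeroForce G S w

/-- `S` is a zero forcing set of `G`. -/
def IsZeroForcingSet (G : SimpleGraph V) (S : Set V) : Prop :=
  ∀ v, ZeroForce G S v

/-- The zero forcing number `Z(G)`. -/
noncomputable def zeroForcingNumber (G : SimpleGraph V) : ℕ :=
  sInf {n | ∃ S : Set V, S.ncard = n ∧ IsZeroForcingSet G S}

/-- The set of vertices eventually colored blue when the vertices of `S` are initially
colored blue and the loop zero forcing color change rule is iterated:  a vertex `w`
becomes blue if it is the unique (possibly) white neighbor of a blue vertex, or if all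
of its neighbors are blue. -/
inductive LoopZeroForce (G : SimpleGraph V) (S : Set V) : V → Prop
  | init (v : V) (h : v ∈ S) : LoopZeroForce G S v
  | force (v w : V) (hv : LoopZeroForce G S v) (hadj : G.Adj v w)
      (h : ∀ u, G.Adj v u → u ≠ w → LoopZeroForce G S u) : LoopZeroForce G S w
  | loop (w : V) (h : ∀ u, G.Adj w u → LoopZeroForce G S u) : LoopZeroForce G S w

/-- `S` is a loop zero forcing set of `G`. -/
def IsLoopZeroForcingSet (G : SimpleGraph V) (S : Set V) : Prop :=
  ∀ v, LoopZeroForce G S v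

/-- The loop zero forcing number `Z_ℓ̇(G)`. -/
noncomputable def loopZeroForcingNumber (G : SimpleGraph V) : ℕ :=
  sInf {n | ∃ S : Set V, S.ncard = n ∧ IsLoopZeroForcingSet G S}

/-- The closed neighborhood `N[v]`. -/
def closedNbhd (G : SimpleGraph V) (v : V) : Set V := insert v (G.neighborSet v)

/-- A legal (closed neighborhood) sequence. -/
def IsLegalSeq (G : SimpleGraph V) (l : List V) : Prop :=
  l.Nodup ∧ ∀ (i : ℕ) (hi : i + 1 < l.length),
    ∃ u ∈ closedNbhd G (l.get ⟨i + 1, hi⟩), ∀ x ∈ l.take (i + 1), u ∉ closedNbhd G x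

/-- A dominating sequence: a legal sequence whose vertex set dominates `G`. -/
def IsDominatingSeq (G : SimpleGraph V) (l : List V) : Prop :=
  IsLegalSeq G l ∧ ∀ v : V, ∃ x ∈ l, v ∈ closedNbhd G x

/-- The Grundy domination number `γ_gr(G)`. -/
noncomputable def grundyDominationNumber (G : SimpleGraph V) : ℕ :=
  sSup {n | ∃ l : List V, IsDominatingSeq G l ∧ l.length = n}

/-- A `Z`-sequence: a legal sequence in which every vertex after the first footprints a
vertex distinct from itself. -/
def IsZSeq (G : SimpleGraph V) (l : List V) : Prop :=
  IsLegalSeq G l ∧ ∀ (i : ℕ) (hi : i + 1 < l.length),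
    ∃ u ∈ G.neighborSet (l.get ⟨i + 1, hi⟩), ∀ x ∈ l.take (i + 1), u ∉ closedNbhd G x

/-- The degree of a vertex, via `Set.ncard`. -/
noncomputable def ndeg (G : SimpleGraph V) (v : V) : ℕ := (G.neighborSet v).ncard

/-- The minimum degree `δ(G)`. -/
noncomputable def minDeg (G : SimpleGraph V) : ℕ := sInf {d | ∃ v : V, ndeg G v = d}

/-- The ring of `k` diamonds:  vertex `(i, 0)` is `uᵢ`, `(i, 1)` is `vᵢ`, `(i, 2)` is `wᵢ`
and `(i, 3)` is `yᵢ`; the `i`-th diamond is `K₄` on `{uᵢ, vᵢ, wᵢ, yᵢ}` minus the edge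
`uᵢyᵢ`, and `yᵢ` is joined to `u_{i+1}` (indices mod `k`). -/
def ringOfDiamonds (k : ℕ) : SimpleGraph (Fin k × Fin 4) :=
  SimpleGraph.fromRel (fun a b =>
    (a.1 = b.1 ∧ ¬(a.2 = 0 ∧ b.2 = 3) ∧ ¬(a.2 = 3 ∧ b.2 = 0)) ∨
    (b.1.val = (a.1.val + 1) % k ∧ a.2 = 3 ∧ b.2 = 0))

/-- `G` has no induced `K_{1,3}`. -/
def ClawFree (G : SimpleGraph V) : Prop :=
  ¬ ∃ v a b c : V, a ≠ b ∧ a ≠ c ∧ b ≠ c ∧ G.Adj v a ∧ G.Adj v b ∧ G.Adj v c ∧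
    ¬ G.Adj a b ∧ ¬ G.Adj a c ∧ ¬ G.Adj b c

/-- `G` is connected and remains connected after deleting any single edge. -/
def TwoEdgeConnected (G : SimpleGraph V) : Prop :=
  G.Connected ∧ ∀ e ∈ G.edgeSet, (G.deleteEdges {e}).Connected

/-- `G` is a maximal outerplanar graph:  its vertices can be arranged on a cycle
(the outer face) so that all edges of `G` are cycle edges or pairwise non-crossing
chords, and `G` has `2n - 3` edges (i.e. it is a triangulation of the polygon). -/
def IsMOP (G : SimpleGraph V) [Fintype V] : Prop :=
  3 ≤ Fintype.card V ∧
  ∃ f : Fin (Fintype.card V) ≃ V,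
    (∀ i j : Fin (Fintype.card V), j.val = (i.val + 1) % Fintype.card V → G.Adj (f i) (f j)) ∧
    (∀ a b c d : Fin (Fintype.card V), a.val < c.val → c.val < b.val → b.val < d.val →
      G.Adj (f a) (f b) → ¬ G.Adj (f c) (f d)) ∧
    G.edgeSet.ncard = 2 * Fintype.card V - 3

/-- A triangle of `G`: three mutually adjacent vertices. In a maximal outerplanar graph
these are exactly the inner (triangular) faces. -/
def IsTriangle (G : SimpleGraph V) (T : Finset V) : Prop :=
  T.card = 3 ∧ ∀ x ∈ T, ∀ y ∈ T, x ≠ y → G.Adj x y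

/-- In a maximal outerplanar graph, an edge lies on the outer face iff it lies in
exactly one triangle. -/
def IsBoundaryEdge (G : SimpleGraph V) (x y : V) : Prop :=
  G.Adj x y ∧ {T : Finset V | IsTriangle G T ∧ x ∈ T ∧ y ∈ T}.ncard = 1

/-- A separator triangle: an inner triangular face none of whose edges lies on the
outer face. -/
def IsSeparatorTriangle (G : SimpleGraph V) (T : Finset V) : Prop :=
  IsTriangle G T ∧ ∀ x ∈ T, ∀ y ∈ T, x ≠ y → ¬ IsBoundaryEdge G x y

/-- A serpentine graph: a maximal outerplanar graph with no separator triangle. -/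
def IsSerpentine (G : SimpleGraph V) [Fintype V] : Prop :=
  IsMOP G ∧ ¬ ∃ T : Finset V, IsSeparatorTriangle G T

/-- The weak planar dual of a maximal outerplanar graph: vertices are the triangles,
two triangles being adjacent when they share an edge. -/
def dualGraph (G : SimpleGraph V) [DecidableEq V] :
    SimpleGraph {T : Finset V // IsTriangle G T} where
  Adj A B := A ≠ B ∧ (A.1 ∩ B.1).card = 2
  symm := by
    constructor
    intro A B h
    exact ⟨h.1.symm, by rw [Finset.inter_comm]; exact h.2⟩
  loopless := by constructor; intro A h; exact h.1 rfl

/-- Degree in the weak planar dual. -/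
noncomputable def dualDeg (G : SimpleGraph V) [DecidableEq V]
    (A : {T : Finset V // IsTriangle G T}) : ℕ :=
  ((dualGraph G).neighborSet A).ncard

/-- A serpentine leaf: the set of triangles along the unique path in the weak dual from
a leaf of the dual to the nearest vertex of dual degree greater than 2. -/
def IsSerpentineLeaf (G : SimpleGraph V) [DecidableEq V]
    (L : Set {T : Finset V // IsTriangle G T}) : Prop :=
  ∃ (a b : {T : Finset V // IsTriangle G T}) (p : (dualGraph G).Walk a b),
    p.IsPath ∧ dualDeg G a = 1 ∧ 2 < dualDeg G b ∧
    (∀ c ∈ p.support, c ≠ a → c ≠ b → dualDeg G c = 2) ∧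
    L = {c | c ∈ p.support}

/-- A fan leaf: a serpentine leaf all of whose triangles share a common vertex lying on
a separator triangle. -/
def IsFanLeaf (G : SimpleGraph V) [DecidableEq V]
    (L : Set {T : Finset V // IsTriangle G T}) : Prop :=
  IsSerpentineLeaf G L ∧
    ∃ v : V, (∃ T : Finset V, IsSeparatorTriangle G T ∧ v ∈ T) ∧ ∀ A ∈ L, v ∈ A.1

/-- A serpentine path: a maximal nonempty set of triangles whose dual vertices have dual
degree 2 and form the unique path between two distinct dual vertices of degree at
least 3. -/
def IsSerpentinePath (G : SimpleGraph V) [DecidableEq V]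
    (P : Set {T : Finset V // IsTriangle G T}) : Prop :=
  ∃ (a b : {T : Finset V // IsTriangle G T}) (p : (dualGraph G).Walk a b),
    p.IsPath ∧ a ≠ b ∧ 3 ≤ dualDeg G a ∧ 3 ≤ dualDeg G b ∧
    (∀ c ∈ p.support, c ≠ a → c ≠ b → dualDeg G c = 2) ∧
    P = {c | c ∈ p.support ∧ c ≠ a ∧ c ≠ b} ∧ P.Nonempty

/-- A vertex lying on some separator triangle. -/
def SepVertex (G : SimpleGraph V) (v : V) : Prop :=
  ∃ T : Finset V, IsSeparatorTriangle G T ∧ v ∈ T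

/-- The subgraph `G_△` of `G` formed by the separator triangles. -/
def sepSubgraph (G : SimpleGraph V) : SimpleGraph {v : V // SepVertex G v} where
  Adj x y := G.Adj x.1 y.1 ∧ ∃ T : Finset V, IsSeparatorTriangle G T ∧ x.1 ∈ T ∧ y.1 ∈ T
  symm := by
    constructor
    rintro x y ⟨h, T, hT, hx, hy⟩
    exact ⟨h.symm, T, hT, hy, hx⟩
  loopless := by constructor; rintro x ⟨h, -⟩; exact G.loopless.irrefl _ h

/-- The vertex set (in `V`) of a connected component of `G_△`. -/
def compVerts (G : SimpleGraph V) (c : (sepSubgraph G).ConnectedComponent) : Set V :=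
  {v | ∃ h : SepVertex G v, (sepSubgraph G).connectedComponentMk ⟨v, h⟩ = c}

/-- A connected component `c` of `G_△` is adjacent to a set `P` of triangles if some
separator triangle lying in `c` shares an edge with a triangle of `P`. -/
def CompAdjTriangles (G : SimpleGraph V) [DecidableEq V]
    (c : (sepSubgraph G).ConnectedComponent)
    (P : Set {T : Finset V // IsTriangle G T}) : Prop :=
  ∃ A : {T : Finset V // IsTriangle G T}, IsSeparatorTriangle G A.1 ∧
    (∀ v ∈ A.1, v ∈ compVerts G c) ∧ ∃ B ∈ P, (dualGraph G).Adj A B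

/-- A cyclic interval of `Fin m`. -/
def IsCyclicInterval {m : ℕ} (S : Set (Fin m)) : Prop :=
  ∃ a len : ℕ, S = {i : Fin m | ∃ j : ℕ, j < len ∧ i.val = (a + j) % m}

/-- `G` is the Halin graph obtained from the spanning tree `T` (with at least four
vertices and no vertex of degree 2) by joining the leaves of `T` in the cyclic order
`σ`.  The planarity of the construction is encoded by the requirement that for every
edge of `T` the leaves on either side of it occupy a cyclic interval of the outer
cycle. -/
def IsHalinStructure (G T : SimpleGraph V) [Fintype V] {m : ℕ} (σ : Fin m → V) : Prop :=
  T.IsTree ∧ 4 ≤ Fintype.card V ∧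
  (∀ v, ndeg T v ≠ 2) ∧
  Function.Injective σ ∧
  (∀ v, ndeg T v = 1 ↔ ∃ i, σ i = v) ∧
  (∀ v w, G.Adj v w ↔ T.Adj v w ∨
    ∃ i j : Fin m, j.val = (i.val + 1) % m ∧
      ((v = σ i ∧ w = σ j) ∨ (v = σ j ∧ w = σ i))) ∧
  (∀ v w, T.Adj v w →
    IsCyclicInterval {i : Fin m | (T.deleteEdges {s(v, w)}).Reachable v (σ i)})

/-- An end support vertex of the tree `T`: a vertex adjacent to a leaf with at most one
non-leaf neighbor. -/
def IsEndSupport (T : SimpleGraph V) (v : V) : Prop :=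
  (∃ u, T.Adj v u ∧ ndeg T u = 1) ∧ {u | T.Adj v u ∧ ndeg T u ≠ 1}.ncard ≤ 1


/-! ### Auxiliary material for `stmt_1` -/

section RoDAux

lemma zeroForce_map {V W : Type*} {G : SimpleGraph V} {H : SimpleGraph W} {S : Set V}
    (e : G ≃g H) {v : V} (h : ZeroForce G S v) : ZeroForce H (e '' S) (e v) := by
  induction h with
  | init v hv => exact ZeroForce.init _ ⟨v, hv, rfl⟩
  | force v w hv hadj h ihv ih =>
    refine ZeroForce.force (e v) (e w) ihv (e.map_adj_iff.mpr hadj) ?_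
    intro u' hadj' hne'
    have h1 : G.Adj v (e.symm u') := by
      rw [← e.apply_symm_apply u'] at hadj'
      exact e.map_adj_iff.mp hadj'
    have h2 : e.symm u' ≠ w := fun hh => hne' (by rw [← e.apply_symm_apply u', hh])
    have := ih _ h1 h2
    rwa [e.apply_symm_apply] at this

lemma loopZeroForce_map {V W : Type*} {G : SimpleGraph V} {H : SimpleGraph W} {S : Set V}
    (e : G ≃g H) {v : V} (h : LoopZeroForce G S v) : LoopZeroForce H (e '' S) (e v) := by
  induction h with
  | init v hv => exact LoopZeroForce.init _ ⟨v, hv, rfl⟩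
  | force v w hv hadj h ihv ih =>
    refine LoopZeroForce.force (e v) (e w) ihv (e.map_adj_iff.mpr hadj) ?_
    intro u' hadj' hne'
    have h1 : G.Adj v (e.symm u') := by
      rw [← e.apply_symm_apply u'] at hadj'
      exact e.map_adj_iff.mp hadj'
    have h2 : e.symm u' ≠ w := fun hh => hne' (by rw [← e.apply_symm_apply u', hh])
    have := ih _ h1 h2
    rwa [e.apply_symm_apply] at this
  | loop w h ih =>
    refine LoopZeroForce.loop (e w) ?_
    intro u' hadj'
    have h1 : G.Adj w (e.symm u') := by
      rw [← e.apply_symm_apply u'] at hadj'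
      exact e.map_adj_iff.mp hadj'
    have := ih _ h1
    rwa [e.apply_symm_apply] at this

lemma zeroForce_to_loop {V : Type*} {G : SimpleGraph V} {S : Set V} {v : V}
    (h : ZeroForce G S v) : LoopZeroForce G S v := by
  induction h with
  | init v hv => exact LoopZeroForce.init _ hv
  | force v w hv hadj h ihv ih => exact LoopZeroForce.force v w ihv hadj ih

lemma fort_lemma {V : Type*} {G : SimpleGraph V} {S F : Set V}
    (h1 : ∀ v ∈ S, v ∉ F)
    (h2 : ∀ v ∈ F, ∃ u ∈ F, G.Adj v u)
    (h3 : ∀ v, v ∉ F → ∀ w ∈ F, G.Adj v w → ∃ w' ∈ F, w' ≠ w ∧ G.Adj v w')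
    {v : V} (hv : LoopZeroForce G S v) : v ∉ F := by
  induction hv with
  | init v hv => exact h1 v hv
  | force v w hv hadj h ihv ih =>
    intro hwF
    obtain ⟨w', hw'F, hne, hadj'⟩ := h3 v ihv w hwF hadj
    exact ih w' hadj' hne hw'F
  | loop w h ih =>
    intro hwF
    obtain ⟨u, huF, hadj⟩ := h2 w hwF
    exact ih u hadj huF

lemma isZFS_map {V W : Type*} {G : SimpleGraph V} {H : SimpleGraph W}
    (e : G ≃g H) {S : Set V} (hS : IsZeroForcingSet G S) :
    IsZeroForcingSet H (e '' S) := by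
  intro w
  have := zeroForce_map e (hS (e.symm w))
  rwa [e.apply_symm_apply] at this

lemma isLoopZFS_map {V W : Type*} {G : SimpleGraph V} {H : SimpleGraph W}
    (e : G ≃g H) {S : Set V} (hS : IsLoopZeroForcingSet G S) :
    IsLoopZeroForcingSet H (e '' S) := by
  intro w
  have := loopZeroForce_map e (hS (e.symm w))
  rwa [e.apply_symm_apply] at this

lemma zfn_iso {V W : Type*} {G : SimpleGraph V} {H : SimpleGraph W} (e : G ≃g H) :
    zeroForcingNumber G = zeroForcingNumber H := by
  unfold zeroForcingNumber
  congr 1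
  ext n
  simp only [Set.mem_setOf_eq]
  constructor
  · rintro ⟨S, hc, hf⟩
    exact ⟨e '' S, by rw [Set.ncard_image_of_injective S e.injective]; exact hc,
      isZFS_map e hf⟩
  · rintro ⟨S, hc, hf⟩
    exact ⟨e.symm '' S, by rw [Set.ncard_image_of_injective S e.symm.injective]; exact hc,
      isZFS_map e.symm hf⟩

lemma loopZFN_iso {V W : Type*} {G : SimpleGraph V} {H : SimpleGraph W} (e : G ≃g H) :
    loopZeroForcingNumber G = loopZeroForcingNumber H := by
  unfold loopZeroForcingNumber
  congr 1
  ext n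
  simp only [Set.mem_setOf_eq]
  constructor
  · rintro ⟨S, hc, hf⟩
    exact ⟨e '' S, by rw [Set.ncard_image_of_injective S e.injective]; exact hc,
      isLoopZFS_map e hf⟩
  · rintro ⟨S, hc, hf⟩
    exact ⟨e.symm '' S, by rw [Set.ncard_image_of_injective S e.symm.injective]; exact hc,
      isLoopZFS_map e.symm hf⟩

variable {k : ℕ}

def rsucc (i : Fin k) : Fin k := ⟨(i.1+1) % k, Nat.mod_lt _ (by have := i.2; omega)⟩
def rpred (i : Fin k) : Fin k := ⟨(i.1+(k-1)) % k, Nat.mod_lt _ (by have := i.2; omega)⟩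

lemma rpred_rsucc (i : Fin k) : rpred (rsucc i) = i := by
  have h := i.2
  apply Fin.ext
  show ((i.1+1) % k + (k-1)) % k = i.1
  rw [Nat.mod_add_mod]
  have e : i.1 + 1 + (k-1) = i.1 + k := by omega
  rw [e, Nat.add_mod_right, Nat.mod_eq_of_lt h]

lemma rsucc_rpred (i : Fin k) : rsucc (rpred i) = i := by
  have h := i.2
  apply Fin.ext
  show ((i.1+(k-1)) % k + 1) % k = i.1
  rw [Nat.mod_add_mod]
  have e : i.1 + (k-1) + 1 = i.1 + k := by omega
  rw [e, Nat.add_mod_right, Nat.mod_eq_of_lt h]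

lemma rsucc_val {i : Fin k} (j : Fin k) : j.1 = (i.1 + 1) % k ↔ j = rsucc i :=
  ⟨fun h => Fin.ext h, fun h => by rw [h]; rfl⟩

lemma rpred_val {i : Fin k} (j : Fin k) : i.1 = (j.1 + 1) % k ↔ j = rpred i := by
  constructor
  · intro h
    have : i = rsucc j := Fin.ext h
    rw [this, rpred_rsucc]
  · intro h
    subst h
    exact congrArg Fin.val (rsucc_rpred i).symm

lemma n0 (i : Fin k) (q : Fin k × Fin 4) :
    (ringOfDiamonds k).Adj (i,0) q ↔ q = (i,1) ∨ q = (i,2) ∨ q = (rpred i, 3) := by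
  obtain ⟨j, b⟩ := q
  rw [ringOfDiamonds, fromRel_adj]
  fin_cases b <;> simp [Prod.ext_iff, eq_comm, rpred_val]

lemma n1 (i : Fin k) (q : Fin k × Fin 4) :
    (ringOfDiamonds k).Adj (i,1) q ↔ q = (i,0) ∨ q = (i,2) ∨ q = (i,3) := by
  obtain ⟨j, b⟩ := q
  rw [ringOfDiamonds, fromRel_adj]
  fin_cases b <;> simp [Prod.ext_iff, eq_comm]

lemma n2 (i : Fin k) (q : Fin k × Fin 4) :
    (ringOfDiamonds k).Adj (i,2) q ↔ q = (i,0) ∨ q = (i,1) ∨ q = (i,3) := by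
  obtain ⟨j, b⟩ := q
  rw [ringOfDiamonds, fromRel_adj]
  fin_cases b <;> simp [Prod.ext_iff, eq_comm]

lemma n3 (i : Fin k) (q : Fin k × Fin 4) :
    (ringOfDiamonds k).Adj (i,3) q ↔ q = (i,1) ∨ q = (i,2) ∨ q = (rsucc i, 0) := by
  obtain ⟨j, b⟩ := q
  rw [ringOfDiamonds, fromRel_adj]
  fin_cases b <;> simp [Prod.ext_iff, eq_comm, rsucc_val]

lemma ne2 {i j : Fin k} {a b : Fin 4} (h : a ≠ b) : (i,a) ≠ (j,b) :=
  fun he => h (congrArg Prod.snd he)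

lemma rod_upper (hk : 2 ≤ k) :
    ∃ S : Set (Fin k × Fin 4), S.ncard = k + 2 ∧ IsZeroForcingSet (ringOfDiamonds k) S := by
  have hk0 : 0 < k := by omega
  set z : Fin k := ⟨0, hk0⟩ with hz
  set L : Set (Fin k × Fin 4) := {p | p.2 = 1} with hLdef
  set S : Set (Fin k × Fin 4) := insert (z,0) (insert (z,2) L) with hSdef
  have memL : ∀ i : Fin k, (i,(1:Fin 4)) ∈ S :=
    fun i => Set.mem_insert_of_mem _ (Set.mem_insert_of_mem _ rfl)
  have mem_z0 : ((z,0) : Fin k × Fin 4) ∈ S := Set.mem_insert _ _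
  have mem_z2 : ((z,2) : Fin k × Fin 4) ∈ S :=
    Set.mem_insert_of_mem _ (Set.mem_insert _ _)
  refine ⟨S, ?_, ?_⟩
  · have hLcard : L.ncard = k := by
      have himg : (fun i : Fin k => (i, (1:Fin 4))) '' Set.univ = L := by
        ext p
        constructor
        · rintro ⟨i, -, rfl⟩; exact rfl
        · intro hp; exact ⟨p.1, Set.mem_univ _, Prod.ext rfl hp.symm⟩
      rw [← himg, Set.ncard_image_of_injective _ (fun a b h => (Prod.ext_iff.mp h).1),
        Set.ncard_univ]
      simp
    have h2 : ((z,2) : Fin k × Fin 4) ∉ L := by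
      intro h
      exact absurd h (by simp [hLdef])
    have h0 : ((z,0) : Fin k × Fin 4) ∉ insert ((z,2) : Fin k × Fin 4) L := by
      intro h
      rcases h with h | h
      · exact ne2 (by decide) h
      · exact absurd h (by simp [hLdef])
    rw [hSdef, Set.ncard_insert_of_notMem h0 (Set.toFinite _),
      Set.ncard_insert_of_notMem h2 (Set.toFinite _), hLcard]
  · have main : ∀ i : ℕ, ∀ (h : i < k) (b : Fin 4),
        ZeroForce (ringOfDiamonds k) S (⟨i,h⟩, b) := by
      intro i
      induction i with
      | zero =>
        intro h b
        have e0 : (⟨0,h⟩ : Fin k) = z := rfl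
        have h3 : ZeroForce (ringOfDiamonds k) S (z, 3) := by
          refine ZeroForce.force (z,1) (z,3) (ZeroForce.init _ (memL z))
            ((n1 z _).mpr (Or.inr (Or.inr rfl))) ?_
          intro u hu hne
          rcases (n1 z u).mp hu with h | h | h
          · exact h ▸ ZeroForce.init _ mem_z0
          · exact h ▸ ZeroForce.init _ mem_z2
          · exact absurd h hne
        rw [e0]
        fin_cases b
        · exact ZeroForce.init _ mem_z0
        · exact ZeroForce.init _ (memL z)
        · exact ZeroForce.init _ mem_z2
        · exact h3
      | succ i ih =>
        intro h b
        have hik : i < k := by omega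
        set I : Fin k := ⟨i, hik⟩ with hI
        set J : Fin k := ⟨i+1, h⟩ with hJ
        have hsucc : rsucc I = J := by
          apply Fin.ext
          show (i+1) % k = i+1
          exact Nat.mod_eq_of_lt h
        have hpred : rpred J = I := by rw [← hsucc, rpred_rsucc]
        have hJ0 : ZeroForce (ringOfDiamonds k) S (J, 0) := by
          refine ZeroForce.force (I,3) (J,0) (ih hik 3)
            ((n3 I _).mpr (Or.inr (Or.inr (by rw [hsucc])))) ?_
          intro u hu hne
          rcases (n3 I u).mp hu with hh | hh | hh
          · exact hh ▸ ih hik 1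
          · exact hh ▸ ih hik 2
          · rw [hsucc] at hh; exact absurd hh hne
        have hJ1 : ZeroForce (ringOfDiamonds k) S (J, 1) := ZeroForce.init _ (memL J)
        have hJ2 : ZeroForce (ringOfDiamonds k) S (J, 2) := by
          refine ZeroForce.force (J,0) (J,2) hJ0
            ((n0 J _).mpr (Or.inr (Or.inl rfl))) ?_
          intro u hu hne
          rcases (n0 J u).mp hu with hh | hh | hh
          · exact hh ▸ hJ1
          · exact absurd hh hne
          · rw [hpred] at hh; exact hh ▸ ih hik 3
        have hJ3 : ZeroForce (ringOfDiamonds k) S (J, 3) := by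
          refine ZeroForce.force (J,1) (J,3) hJ1
            ((n1 J _).mpr (Or.inr (Or.inr rfl))) ?_
          intro u hu hne
          rcases (n1 J u).mp hu with hh | hh | hh
          · exact hh ▸ hJ0
          · exact hh ▸ hJ2
          · exact absurd hh hne
        fin_cases b
        · exact hJ0
        · exact hJ1
        · exact hJ2
        · exact hJ3
    intro p
    exact main p.1.1 p.1.2 p.2

lemma rod_lower (hk : 2 ≤ k) {S : Set (Fin k × Fin 4)}
    (hS : IsLoopZeroForcingSet (ringOfDiamonds k) S) : k + 2 ≤ S.ncard := by
  classical
  by_contra hcon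
  push_neg at hcon
  have hcard : S.ncard ≤ k + 1 := by omega
  -- Step 1: every pair {v_i, w_i} meets S
  have hpair : ∀ i : Fin k, (i,(1:Fin 4)) ∈ S ∨ (i,(2:Fin 4)) ∈ S := by
    intro i
    by_contra hp
    push_neg at hp
    obtain ⟨hp1, hp2⟩ := hp
    set F : Set (Fin k × Fin 4) := {(i,1), (i,2)} with hF
    have hmem1 : ((i,1) : Fin k × Fin 4) ∈ F := Set.mem_insert _ _
    have hmem2 : ((i,2) : Fin k × Fin 4) ∈ F := Set.mem_insert_of_mem _ rfl
    have key := fort_lemma (F := F) ?_ ?_ ?_ (hS (i,1))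
    · exact key hmem1
    · rintro v hvS (rfl | rfl)
      · exact hp1 hvS
      · exact hp2 hvS
    · rintro v (rfl | rfl)
      · exact ⟨(i,2), hmem2, (n1 i _).mpr (Or.inr (Or.inl rfl))⟩
      · exact ⟨(i,1), hmem1, (n2 i _).mpr (Or.inr (Or.inl rfl))⟩
    · rintro v hvF w (rfl | rfl) hadj
      · rcases (n1 i v).mp hadj.symm with rfl | rfl | rfl
        · exact ⟨(i,2), hmem2, ne2 (by decide), (n0 i _).mpr (Or.inr (Or.inl rfl))⟩
        · exact absurd hmem2 hvF
        · exact ⟨(i,2), hmem2, ne2 (by decide), (n3 i _).mpr (Or.inr (Or.inl rfl))⟩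
      · rcases (n2 i v).mp hadj.symm with rfl | rfl | rfl
        · exact ⟨(i,1), hmem1, ne2 (by decide), (n0 i _).mpr (Or.inl rfl)⟩
        · exact absurd hmem1 hvF
        · exact ⟨(i,1), hmem1, ne2 (by decide), (n3 i _).mpr (Or.inl rfl)⟩
  -- Step 2: counting lemma
  have key : ∀ (i : Fin k) (a b c : Fin k × Fin 4), a ∈ S → b ∈ S → c ∈ S →
      a ≠ b → a ≠ c → b ≠ c →
      (a.1 = i ∨ a.2 = 0 ∨ a.2 = 3) → (b.1 = i ∨ b.2 = 0 ∨ b.2 = 3) →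
      (c.1 = i ∨ c.2 = 0 ∨ c.2 = 3) → False := by
    intro i a b c haS hbS hcS hab hac hbc ha hb hc
    set pick : Fin k → Fin k × Fin 4 :=
      fun j => if (j,(1:Fin 4)) ∈ S then (j,1) else (j,2) with hpick
    have pickS : ∀ j, pick j ∈ S := by
      intro j
      by_cases h : (j,(1:Fin 4)) ∈ S
      · simpa [hpick, h] using h
      · simpa [hpick, h] using (hpair j).resolve_left h
    have pick1 : ∀ j, (pick j).1 = j := by
      intro j; by_cases h : (j,(1:Fin 4)) ∈ S <;> simp [hpick, h]
    have pick2 : ∀ j, (pick j).2 = 1 ∨ (pick j).2 = 2 := by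
      intro j; by_cases h : (j,(1:Fin 4)) ∈ S <;> simp [hpick, h]
    set B : Set (Fin k × Fin 4) := pick '' {j | j ≠ i} with hB
    have hBsub : B ⊆ S := by rintro x ⟨j, -, rfl⟩; exact pickS j
    have hdisj : ∀ x ∈ B, x ≠ a ∧ x ≠ b ∧ x ≠ c := by
      rintro x ⟨j, hj, rfl⟩
      have hx1 : (pick j).1 ≠ i := by rw [pick1]; exact hj
      have hx2 : (pick j).2 ≠ 0 ∧ (pick j).2 ≠ 3 := by
        rcases pick2 j with h | h <;> rw [h] <;> exact ⟨by decide, by decide⟩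
      refine ⟨?_, ?_, ?_⟩ <;> rintro rfl
      · rcases ha with h | h | h
        exacts [hx1 h, hx2.1 h, hx2.2 h]
      · rcases hb with h | h | h
        exacts [hx1 h, hx2.1 h, hx2.2 h]
      · rcases hc with h | h | h
        exacts [hx1 h, hx2.1 h, hx2.2 h]
    have hBcard : B.ncard = k - 1 := by
      rw [hB, Set.ncard_image_of_injOn
        (fun x _ y _ h => by rw [← pick1 x, ← pick1 y, h])]
      have : {j : Fin k | j ≠ i} = Set.univ \ {i} := by ext j; simp
      rw [this, Set.ncard_diff_singleton_of_mem (Set.mem_univ i), Set.ncard_univ]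
      simp
    have hAcard : ({a, b, c} : Set (Fin k × Fin 4)).ncard = 3 := by
      rw [Set.ncard_insert_of_notMem (by simp [hab, hac]) (Set.toFinite _),
        Set.ncard_pair hbc]
    have hdisj2 : Disjoint ({a, b, c} : Set (Fin k × Fin 4)) B := by
      rw [Set.disjoint_right]
      intro x hxB hxA
      obtain ⟨h1, h2, h3⟩ := hdisj x hxB
      rcases hxA with rfl | rfl | rfl
      exacts [h1 rfl, h2 rfl, h3 rfl]
    have hsub : ({a, b, c} : Set (Fin k × Fin 4)) ∪ B ⊆ S := by
      apply Set.union_subset _ hBsub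
      rintro x (rfl | rfl | rfl)
      exacts [haS, hbS, hcS]
    have := Set.ncard_le_ncard hsub (Set.toFinite _)
    rw [Set.ncard_union_eq hdisj2 (Set.toFinite _) (Set.toFinite _), hAcard, hBcard] at this
    omega
  -- Step 3: a white vertex exists
  have hSne : S ≠ Set.univ := by
    intro h
    rw [h, Set.ncard_univ] at hcard
    simp [Nat.card_eq_fintype_card] at hcard
    omega
  obtain ⟨v0, hv0⟩ := Set.ne_univ_iff_exists_notMem S |>.mp hSne
  -- Step 4: the complement of S is a fort
  have hfort := fort_lemma (G := ringOfDiamonds k) (S := S) (F := Sᶜ) ?_ ?_ ?_ (hS v0)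
  · exact hfort hv0
  · intro v hv hvc; exact hvc hv
  · -- every white vertex has a white neighbor
    intro v hv
    by_contra hcon2
    push_neg at hcon2
    obtain ⟨j, b⟩ := v
    fin_cases b
    · refine key j (j,1) (j,2) (rpred j,3) ?_ ?_ ?_ (ne2 (by decide)) (ne2 (by decide))
        (ne2 (by decide)) (Or.inl rfl) (Or.inl rfl) (Or.inr (Or.inr rfl))
      · by_contra h
        exact hcon2 _ h ((n0 j _).mpr (Or.inl rfl))
      · by_contra h
        exact hcon2 _ h ((n0 j _).mpr (Or.inr (Or.inl rfl)))
      · by_contra h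
        exact hcon2 _ h ((n0 j _).mpr (Or.inr (Or.inr rfl)))
    · refine key j (j,0) (j,2) (j,3) ?_ ?_ ?_ (ne2 (by decide)) (ne2 (by decide))
        (ne2 (by decide)) (Or.inl rfl) (Or.inl rfl) (Or.inl rfl)
      · by_contra h
        exact hcon2 _ h ((n1 j _).mpr (Or.inl rfl))
      · by_contra h
        exact hcon2 _ h ((n1 j _).mpr (Or.inr (Or.inl rfl)))
      · by_contra h
        exact hcon2 _ h ((n1 j _).mpr (Or.inr (Or.inr rfl)))
    · refine key j (j,0) (j,1) (j,3) ?_ ?_ ?_ (ne2 (by decide)) (ne2 (by decide))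
        (ne2 (by decide)) (Or.inl rfl) (Or.inl rfl) (Or.inl rfl)
      · by_contra h
        exact hcon2 _ h ((n2 j _).mpr (Or.inl rfl))
      · by_contra h
        exact hcon2 _ h ((n2 j _).mpr (Or.inr (Or.inl rfl)))
      · by_contra h
        exact hcon2 _ h ((n2 j _).mpr (Or.inr (Or.inr rfl)))
    · refine key j (j,1) (j,2) (rsucc j,0) ?_ ?_ ?_ (ne2 (by decide)) (ne2 (by decide))
        (ne2 (by decide)) (Or.inl rfl) (Or.inl rfl) (Or.inr (Or.inl rfl))
      · by_contra h
        exact hcon2 _ h ((n3 j _).mpr (Or.inl rfl))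
      · by_contra h
        exact hcon2 _ h ((n3 j _).mpr (Or.inr (Or.inl rfl)))
      · by_contra h
        exact hcon2 _ h ((n3 j _).mpr (Or.inr (Or.inr rfl)))
  · -- every blue vertex with a white neighbor has two white neighbors
    intro v hv w hw hadj
    rw [Set.notMem_compl_iff] at hv
    rw [Set.mem_compl_iff] at hw
    by_contra hcon2
    push_neg at hcon2
    have get : ∀ u, u ≠ w → (ringOfDiamonds k).Adj v u → u ∈ S := by
      intro u hne hadj'
      by_contra h
      exact (hcon2 u h hne) hadj'
    obtain ⟨j, b⟩ := v
    fin_cases b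
    · rcases (n0 j w).mp hadj with rfl | rfl | rfl
      · exact key j (j,0) (j,2) (rpred j,3) hv
          (get _ (ne2 (by decide)) ((n0 j _).mpr (Or.inr (Or.inl rfl))))
          (get _ (ne2 (by decide)) ((n0 j _).mpr (Or.inr (Or.inr rfl))))
          (ne2 (by decide)) (ne2 (by decide)) (ne2 (by decide))
          (Or.inl rfl) (Or.inl rfl) (Or.inr (Or.inr rfl))
      · exact key j (j,0) (j,1) (rpred j,3) hv
          (get _ (ne2 (by decide)) ((n0 j _).mpr (Or.inl rfl)))
          (get _ (ne2 (by decide)) ((n0 j _).mpr (Or.inr (Or.inr rfl))))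
          (ne2 (by decide)) (ne2 (by decide)) (ne2 (by decide))
          (Or.inl rfl) (Or.inl rfl) (Or.inr (Or.inr rfl))
      · exact key j (j,0) (j,1) (j,2) hv
          (get _ (ne2 (by decide)) ((n0 j _).mpr (Or.inl rfl)))
          (get _ (ne2 (by decide)) ((n0 j _).mpr (Or.inr (Or.inl rfl))))
          (ne2 (by decide)) (ne2 (by decide)) (ne2 (by decide))
          (Or.inl rfl) (Or.inl rfl) (Or.inl rfl)
    · rcases (n1 j w).mp hadj with rfl | rfl | rfl
      · exact key j (j,1) (j,2) (j,3) hv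
          (get _ (ne2 (by decide)) ((n1 j _).mpr (Or.inr (Or.inl rfl))))
          (get _ (ne2 (by decide)) ((n1 j _).mpr (Or.inr (Or.inr rfl))))
          (ne2 (by decide)) (ne2 (by decide)) (ne2 (by decide))
          (Or.inl rfl) (Or.inl rfl) (Or.inl rfl)
      · exact key j (j,1) (j,0) (j,3) hv
          (get _ (ne2 (by decide)) ((n1 j _).mpr (Or.inl rfl)))
          (get _ (ne2 (by decide)) ((n1 j _).mpr (Or.inr (Or.inr rfl))))
          (ne2 (by decide)) (ne2 (by decide)) (ne2 (by decide))
          (Or.inl rfl) (Or.inl rfl) (Or.inl rfl)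
      · exact key j (j,1) (j,0) (j,2) hv
          (get _ (ne2 (by decide)) ((n1 j _).mpr (Or.inl rfl)))
          (get _ (ne2 (by decide)) ((n1 j _).mpr (Or.inr (Or.inl rfl))))
          (ne2 (by decide)) (ne2 (by decide)) (ne2 (by decide))
          (Or.inl rfl) (Or.inl rfl) (Or.inl rfl)
    · rcases (n2 j w).mp hadj with rfl | rfl | rfl
      · exact key j (j,2) (j,1) (j,3) hv
          (get _ (ne2 (by decide)) ((n2 j _).mpr (Or.inr (Or.inl rfl))))
          (get _ (ne2 (by decide)) ((n2 j _).mpr (Or.inr (Or.inr rfl))))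
          (ne2 (by decide)) (ne2 (by decide)) (ne2 (by decide))
          (Or.inl rfl) (Or.inl rfl) (Or.inl rfl)
      · exact key j (j,2) (j,0) (j,3) hv
          (get _ (ne2 (by decide)) ((n2 j _).mpr (Or.inl rfl)))
          (get _ (ne2 (by decide)) ((n2 j _).mpr (Or.inr (Or.inr rfl))))
          (ne2 (by decide)) (ne2 (by decide)) (ne2 (by decide))
          (Or.inl rfl) (Or.inl rfl) (Or.inl rfl)
      · exact key j (j,2) (j,0) (j,1) hv
          (get _ (ne2 (by decide)) ((n2 j _).mpr (Or.inl rfl)))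
          (get _ (ne2 (by decide)) ((n2 j _).mpr (Or.inr (Or.inl rfl))))
          (ne2 (by decide)) (ne2 (by decide)) (ne2 (by decide))
          (Or.inl rfl) (Or.inl rfl) (Or.inl rfl)
    · rcases (n3 j w).mp hadj with rfl | rfl | rfl
      · exact key j (j,3) (j,2) (rsucc j,0) hv
          (get _ (ne2 (by decide)) ((n3 j _).mpr (Or.inr (Or.inl rfl))))
          (get _ (ne2 (by decide)) ((n3 j _).mpr (Or.inr (Or.inr rfl))))
          (ne2 (by decide)) (ne2 (by decide)) (ne2 (by decide))
          (Or.inl rfl) (Or.inl rfl) (Or.inr (Or.inl rfl))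
      · exact key j (j,3) (j,1) (rsucc j,0) hv
          (get _ (ne2 (by decide)) ((n3 j _).mpr (Or.inl rfl)))
          (get _ (ne2 (by decide)) ((n3 j _).mpr (Or.inr (Or.inr rfl))))
          (ne2 (by decide)) (ne2 (by decide)) (ne2 (by decide))
          (Or.inl rfl) (Or.inl rfl) (Or.inr (Or.inl rfl))
      · exact key j (j,3) (j,1) (j,2) hv
          (get _ (ne2 (by decide)) ((n3 j _).mpr (Or.inl rfl)))
          (get _ (ne2 (by decide)) ((n3 j _).mpr (Or.inr (Or.inl rfl))))
          (ne2 (by decide)) (ne2 (by decide)) (ne2 (by decide))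
          (Or.inl rfl) (Or.inl rfl) (Or.inl rfl)


end RoDAux

/-- If `G` is a ring of `k ≥ 2` diamonds, then `Z_ℓ̇(G) = Z(G) = n(G)/4 + 2`. -/
theorem stmt_1 {V : Type*} [Fintype V] (G : SimpleGraph V) (k : ℕ) (hk : 2 ≤ k)
    (hiso : Nonempty (G ≃g ringOfDiamonds k)) :
    loopZeroForcingNumber G = Fintype.card V / 4 + 2 ∧
      zeroForcingNumber G = Fintype.card V / 4 + 2 := by
  obtain ⟨e⟩ := hiso
  have hcardV : Fintype.card V = k * 4 := by
    rw [Fintype.card_congr e.toEquiv]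
    simp
  have h4 : Fintype.card V / 4 + 2 = k + 2 := by omega
  rw [h4]
  obtain ⟨S0, hS0card, hS0f⟩ := rod_upper hk
  have hmem_z : (k + 2) ∈ {n | ∃ S : Set (Fin k × Fin 4), S.ncard = n ∧
      IsZeroForcingSet (ringOfDiamonds k) S} := ⟨S0, hS0card, hS0f⟩
  have hmem_l : (k + 2) ∈ {n | ∃ S : Set (Fin k × Fin 4), S.ncard = n ∧
      IsLoopZeroForcingSet (ringOfDiamonds k) S} :=
    ⟨S0, hS0card, fun v => zeroForce_to_loop (hS0f v)⟩
  have hR_loop : loopZeroForcingNumber (ringOfDiamonds k) = k + 2 := by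
    apply le_antisymm
    · exact Nat.sInf_le hmem_l
    · refine le_csInf ⟨_, hmem_l⟩ ?_
      rintro n ⟨S, hc, hf⟩
      exact hc ▸ rod_lower hk hf
  have hR_z : zeroForcingNumber (ringOfDiamonds k) = k + 2 := by
    apply le_antisymm
    · exact Nat.sInf_le hmem_z
    · refine le_csInf ⟨_, hmem_z⟩ ?_
      rintro n ⟨S, hc, hf⟩
      exact hc ▸ rod_lower hk (fun v => zeroForce_to_loop (hf v))
  exact ⟨(loopZFN_iso e).trans hR_loop, (zfn_iso e).trans hR_z⟩
end

section
/- Let G be a maximal outerplanar graph with at least one separator triangle (t ≥ 1) whose subgraph G_△ formed by the separator triangles has exactly one connected component. Then the zero forcing number of G satisfies Z(G) ≥ ⌈n_2/2⌉, where n_2 is the number of vertices of degree 2 in G. -/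
open SimpleGraph

variable {V : Type*}

section AuxZF

set_option linter.unusedSectionVars false



variable [Fintype V]

def IsChrono (G : SimpleGraph V) (S : Set V) (l : List V) : Prop :=
  l.Nodup ∧ (∀ x ∈ l, x ∉ S) ∧
  ∀ k (hk : k < l.length), ∃ v, (v ∈ S ∨ v ∈ l.take k) ∧ G.Adj v (l.get ⟨k, hk⟩) ∧
    ∀ u, G.Adj v u → u ≠ l.get ⟨k, hk⟩ → (u ∈ S ∨ u ∈ l.take k)

lemma exists_max_chrono (G : SimpleGraph V) (S : Set V) :
    ∃ l, IsChrono G S l ∧ ∀ l', IsChrono G S l' → l'.length ≤ l.length := by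
  have hub : ∀ m ∈ {m | ∃ l, IsChrono G S l ∧ l.length = m}, m ≤ Fintype.card V := by
    rintro m ⟨l, hl, rfl⟩; exact hl.1.length_le_card
  have h0 : 0 ∈ {m | ∃ l, IsChrono G S l ∧ l.length = m} :=
    ⟨[], ⟨List.nodup_nil, by simp, by intro k hk; simp at hk⟩, rfl⟩
  obtain ⟨l, hl, hlen⟩ := Nat.sSup_mem ⟨0, h0⟩ ⟨Fintype.card V, hub⟩
  exact ⟨l, hl, fun l' hl' => hlen ▸ le_csSup ⟨Fintype.card V, hub⟩ ⟨l', hl', rfl⟩⟩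

lemma chrono_cover {G : SimpleGraph V} {S : Set V} {l : List V} (hl : IsChrono G S l)
    (hmax : ∀ l', IsChrono G S l' → l'.length ≤ l.length) :
    ∀ v, ZeroForce G S v → v ∈ S ∨ v ∈ l := by
  intro v hv
  induction hv with
  | init v h => exact Or.inl h
  | force v w hv hadj h ih1 ih2 =>
    by_cases hw : w ∈ S ∨ w ∈ l
    · exact hw
    · push_neg at hw
      exfalso
      have hch : IsChrono G S (l ++ [w]) := by
        refine ⟨?_, ?_, ?_⟩
        · simp [List.nodup_append, hl.1, hw.2]; intro a ha h; exact hw.2 (h ▸ ha)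
        · intro x hx
          rcases List.mem_append.1 hx with hx | hx
          · exact hl.2.1 x hx
          · simp at hx; subst hx; exact hw.1
        · intro k hk
          rcases Nat.lt_or_ge k l.length with hkl | hkl
          · obtain ⟨u, h1, h2, h3⟩ := hl.2.2 k hkl
            have hget : (l ++ [w]).get ⟨k, hk⟩ = l.get ⟨k, hkl⟩ := by
              simp only [List.get_eq_getElem]
              exact List.getElem_append_left hkl
            have htake : (l ++ [w]).take k = l.take k :=
              List.take_append_of_le_length (le_of_lt hkl)
            rw [hget, htake]
            exact ⟨u, h1, h2, h3⟩
          · have hkeq : k = l.length := by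
              have := hk; simp at this; omega
            subst hkeq
            have hget : (l ++ [w]).get ⟨l.length, hk⟩ = w := by
              simp [List.get_eq_getElem]
            have htake : (l ++ [w]).take l.length = l := List.take_left
            rw [hget, htake]
            exact ⟨v, ih1, hadj, fun u hu hne => ih2 u hu hne⟩
      have := hmax _ hch
      simp at this

lemma ears_le_two_mul_zfs (G : SimpleGraph V) (S : Set V) (E : Set V)
    (hE : ∀ e ∈ E, ∃ u w : V, u ≠ w ∧ G.neighborSet e = {u, w} ∧ G.Adj u w)
    (hS : IsZeroForcingSet G S) : E.ncard ≤ 2 * S.ncard := by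
  classical
  obtain ⟨l, hl, hmax⟩ := exists_max_chrono G S
  have hcov : ∀ v : V, v ∈ S ∨ v ∈ l := fun v => chrono_cover hl hmax v (hS v)
  obtain ⟨hnd, hdis, hstep⟩ := hl
  choose Fc hFc1 hFc2 hFc3 using hstep
  have hidx : ∀ x : V, x ∉ S → List.idxOf x l < l.length := fun x hx =>
    List.idxOf_lt_length_iff.2 ((hcov x).resolve_left hx)
  set P : V → V := fun x => if hx : x ∈ S then x else Fc (List.idxOf x l) (hidx x hx)
    with hPdef
  have hPS : ∀ x ∈ S, P x = x := fun x hx => dif_pos hx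
  have htake1 : ∀ (y : V) (k : ℕ), y ∈ l.take k → List.idxOf y l < k := by
    intro y k hy
    have h1 : List.idxOf y l = List.idxOf y (l.take k) := by
      conv_lhs => rw [← List.take_append_drop k l]
      rw [List.idxOf_append_of_mem hy]
    rw [h1]
    calc List.idxOf y (l.take k) < (l.take k).length := List.idxOf_lt_length_iff.2 hy
    _ ≤ k := by simp [List.length_take]
  have K1 : ∀ x, x ∉ S → (G.Adj (P x) x ∧
      (P x ∈ S ∨ (List.idxOf (P x) l < List.idxOf x l)) ∧
      (∀ u, G.Adj (P x) u → u ≠ x → (u ∈ S ∨ List.idxOf u l < List.idxOf x l))) := by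
    intro x hx
    have hk : List.idxOf x l < l.length := hidx x hx
    have hget : l.get ⟨List.idxOf x l, hk⟩ = x := by
      simp [List.get_eq_getElem, List.getElem_idxOf]
    have hPx : P x = Fc (List.idxOf x l) hk := dif_neg hx
    refine ⟨?_, ?_, ?_⟩
    · rw [hPx]; have := hFc2 (List.idxOf x l) hk; rwa [hget] at this
    · rw [hPx]
      rcases hFc1 (List.idxOf x l) hk with h | h
      · exact Or.inl h
      · exact Or.inr (htake1 _ _ h)
    · intro u hu hne
      have h3 := hFc3 (List.idxOf x l) hk u (by rwa [hPx] at hu) (by rwa [hget])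
      rcases h3 with h | h
      · exact Or.inl h
      · exact Or.inr (htake1 _ _ h)
  have K2 : ∀ x y, x ∉ S → y ∉ S → P x = P y → x = y := by
    intro x y hx hy hP
    by_contra hne
    obtain ⟨hadjx, _, hx3⟩ := K1 x hx
    obtain ⟨hadjy, _, hy3⟩ := K1 y hy
    have h1 := hx3 y (by rw [hP]; exact hadjy) (Ne.symm hne)
    have h2 := hy3 x (by rw [← hP]; exact hadjx) hne
    rcases h1 with h | h
    · exact hy h
    rcases h2 with h' | h'
    · exact hx h'
    omega
  have hiter : ∀ (m : ℕ) (x : V), (x ∈ S ∨ List.idxOf x l < m) → P^[m] x ∈ S := by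
    intro m
    induction m with
    | zero =>
      intro x hx
      rcases hx with h | h
      · simpa using h
      · exact absurd h (Nat.not_lt_zero _)
    | succ m ih =>
      intro x hx
      rw [Function.iterate_succ_apply]
      by_cases hxS : x ∈ S
      · rw [hPS x hxS]; exact ih x (Or.inl hxS)
      · have hxlt : List.idxOf x l < m + 1 := hx.resolve_left hxS
        obtain ⟨_, h2, _⟩ := K1 x hxS
        rcases h2 with h' | h'
        · exact ih _ (Or.inl h')
        · exact ih _ (Or.inr (by omega))
  have hfixS : ∀ (m : ℕ) (x : V), x ∈ S → P^[m] x = x := by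
    intro m
    induction m with
    | zero => intro x _; simp
    | succ m ih =>
      intro x hx
      rw [Function.iterate_succ_apply, hPS x hx]
      exact ih x hx
  have hstart : ∀ x : V, P^[l.length] x ∈ S := by
    intro x
    by_cases hx : x ∈ S
    · exact hiter _ x (Or.inl hx)
    · exact hiter _ x (Or.inr (hidx x hx))
  have K3 : ∀ e, e ∈ E → e ∉ S → ∀ x, x ∉ S → P x ≠ e := by
    intro e he heS x hx hPx
    obtain ⟨u, w, huw, hN, hAdjuw⟩ := hE e he
    obtain ⟨hadj_e, hPe2, hPe3⟩ := K1 e heS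
    obtain ⟨hadj_x, hPx2, _⟩ := K1 x hx
    have hex : List.idxOf e l < List.idxOf x l := by
      rcases hPx2 with h | h
      · rw [hPx] at h; exact absurd h heS
      · rwa [hPx] at h
    have huN : u ∈ G.neighborSet e := by rw [hN]; exact Set.mem_insert _ _
    have hwN : w ∈ G.neighborSet e := by rw [hN]; exact Set.mem_insert_of_mem _ rfl
    have hue : u ≠ e := fun h => G.loopless.irrefl e (h ▸ huN)
    have hwe : w ≠ e := fun h => G.loopless.irrefl e (h ▸ hwN)
    have hPeN : P e ∈ G.neighborSet e := hadj_e.symm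
    have hxN : x ∈ G.neighborSet e := by
      rw [hPx] at hadj_x; exact hadj_x
    rw [hN] at hPeN hxN
    simp only [Set.mem_insert_iff, Set.mem_singleton_iff] at hPeN hxN
    have key : ∀ y, (y = u ∨ y = w) → (y ∈ S ∨ List.idxOf y l < List.idxOf e l) := by
      intro y hy
      by_cases hyPe : y = P e
      · subst hyPe; exact hPe2
      · have hadj' : G.Adj (P e) y := by
          rcases hPeN with h1 | h1 <;> rcases hy with h2 | h2
          · exact absurd (h2.trans h1.symm) hyPe
          · rw [h1, h2]; exact hAdjuw
          · rw [h1, h2]; exact hAdjuw.symm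
          · exact absurd (h2.trans h1.symm) hyPe
        have hyne : y ≠ e := by
          rcases hy with h2 | h2
          · rw [h2]; exact hue
          · rw [h2]; exact hwe
        exact hPe3 y hadj' hyne
    rcases key x hxN with h | h
    · exact hx h
    · omega
  have back : ∀ (e1 e2 : V) (m1 m2 j : ℕ), (∀ k, k < m1 → P^[k] e1 ∉ S) →
      (∀ k, k < m2 → P^[k] e2 ∉ S) → P^[m1] e1 = P^[m2] e2 → j ≤ m1 → j ≤ m2 →
      P^[m1 - j] e1 = P^[m2 - j] e2 := by
    intro e1 e2 m1 m2 j h1 h2 heq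
    induction j with
    | zero => intro _ _; simpa using heq
    | succ j ih =>
      intro hj1 hj2
      have hprev := ih (by omega) (by omega)
      have ha : m1 - j = (m1 - (j + 1)) + 1 := by omega
      have hb : m2 - j = (m2 - (j + 1)) + 1 := by omega
      rw [ha, Function.iterate_succ_apply'] at hprev
      rw [hb, Function.iterate_succ_apply'] at hprev
      exact K2 _ _ (h1 _ (by omega)) (h2 _ (by omega)) hprev
  have haux : ∀ (e1 e2 : V) (m1 m2 : ℕ), e1 ∈ E → e1 ∉ S → e2 ∉ S →
      (∀ k, k < m1 → P^[k] e1 ∉ S) → (∀ k, k < m2 → P^[k] e2 ∉ S) →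
      P^[m1] e1 = P^[m2] e2 → m1 ≤ m2 → e1 = e2 := by
    intro e1 e2 m1 m2 he1 h1S h2S hm1 hm2 heq hle
    have h := back e1 e2 m1 m2 m1 hm1 hm2 heq le_rfl hle
    rw [Nat.sub_self] at h
    simp only [Function.iterate_zero_apply] at h
    rcases Nat.eq_or_lt_of_le hle with rfl | hlt
    · rw [Nat.sub_self] at h; simpa using h
    · exfalso
      have hx : m2 - m1 = (m2 - m1 - 1) + 1 := by omega
      rw [hx, Function.iterate_succ_apply'] at h
      exact K3 e1 he1 h1S _ (hm2 _ (by omega)) h.symm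
  have hinj : Set.InjOn (fun x => P^[l.length] x) (E \ S) := by
    intro e1 he1 e2 he2 heq
    simp only at heq
    have h1 : ∃ m, P^[m] e1 ∈ S := ⟨l.length, hstart e1⟩
    have h2 : ∃ m, P^[m] e2 ∈ S := ⟨l.length, hstart e2⟩
    have hle1 : Nat.find h1 ≤ l.length := Nat.find_le (hstart e1)
    have hle2 : Nat.find h2 ≤ l.length := Nat.find_le (hstart e2)
    have hL1 : P^[l.length] e1 = P^[Nat.find h1] e1 := by
      have hh : l.length = (l.length - Nat.find h1) + Nat.find h1 := by omega
      rw [hh, Function.iterate_add_apply]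
      exact hfixS _ _ (Nat.find_spec h1)
    have hL2 : P^[l.length] e2 = P^[Nat.find h2] e2 := by
      have hh : l.length = (l.length - Nat.find h2) + Nat.find h2 := by omega
      rw [hh, Function.iterate_add_apply]
      exact hfixS _ _ (Nat.find_spec h2)
    have heq' : P^[Nat.find h1] e1 = P^[Nat.find h2] e2 := by
      rw [← hL1, ← hL2, heq]
    rcases le_total (Nat.find h1) (Nat.find h2) with h | h
    · exact haux e1 e2 _ _ he1.1 he1.2 he2.2 (fun k hk => Nat.find_min h1 hk)
        (fun k hk => Nat.find_min h2 hk) heq' h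
    · exact (haux e2 e1 _ _ he2.1 he2.2 he1.2 (fun k hk => Nat.find_min h2 hk)
        (fun k hk => Nat.find_min h1 hk) heq'.symm h).symm
  have hmaps : ∀ e ∈ E \ S, P^[l.length] e ∈ S := fun e _ => hstart e
  have c1 : (E ∩ S).ncard ≤ S.ncard := Set.ncard_le_ncard Set.inter_subset_right S.toFinite
  have c2 : (E \ S).ncard ≤ S.ncard := Set.ncard_le_ncard_of_injOn _ hmaps hinj S.toFinite
  have c3 : (E ∩ S).ncard + (E \ S).ncard = E.ncard :=
    Set.ncard_inter_add_ncard_diff_eq_ncard E S E.toFinite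
  omega

def IsChordFam (n : ℕ) (F : Finset (ℕ × ℕ)) : Prop :=
  (∀ p ∈ F, p.1 + 2 ≤ p.2 ∧ p.2 ≤ n - 1 ∧ ¬(p.1 = 0 ∧ p.2 = n - 1)) ∧
  ∀ p ∈ F, ∀ q ∈ F, ¬(p.1 < q.1 ∧ q.1 < p.2 ∧ p.2 < q.2)

lemma chordFam_card_le (n : ℕ) : ∀ F : Finset (ℕ × ℕ), IsChordFam n F → F.card ≤ n - 3 := by
  induction n using Nat.strong_induction_on with
  | _ n ih =>
  intro F hF
  rcases F.eq_empty_or_nonempty with rfl | hne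
  · simp
  obtain ⟨p, hp, hmin⟩ := F.exists_min_image (fun q => q.2 - q.1) hne
  obtain ⟨hp1, hp2, hp3⟩ := hF.1 p hp
  have hn4 : 4 ≤ n := by omega
  have hno : ∀ q ∈ F, q.1 ≠ p.1 + 1 ∧ q.2 ≠ p.1 + 1 := by
    intro q hq
    obtain ⟨hq1, hq2, hq3⟩ := hF.1 q hq
    have hmin' := hmin q hq
    have hnc1 := hF.2 p hp q hq
    have hnc2 := hF.2 q hq p hp
    constructor <;> intro h <;> omega
  set g : ℕ → ℕ := fun x => if x ≤ p.1 then x else x - 1 with hg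
  have hglt : ∀ x y, x ≠ p.1 + 1 → y ≠ p.1 + 1 → (g x < g y ↔ x < y) := by
    intro x y hx hy
    simp only [hg]
    split_ifs <;> omega
  have hginj : ∀ x y, x ≠ p.1 + 1 → y ≠ p.1 + 1 → g x = g y → x = y := by
    intro x y hx hy h
    simp only [hg] at h
    split_ifs at h <;> omega
  have hspan : ∀ q ∈ F.erase p, q.1 ≤ p.1 → p.1 + 2 ≤ q.2 → q.1 + 3 ≤ q.2 := by
    intro q hq h1 h2
    have hqF := Finset.mem_of_mem_erase hq
    have hqp : q ≠ p := Finset.ne_of_mem_erase hq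
    obtain ⟨hq1, hq2, hq3⟩ := hF.1 q hqF
    have hmin' := hmin q hqF
    by_contra hcon
    apply hqp
    have h5 : q.1 = p.1 ∧ q.2 = p.2 := by omega
    exact Prod.ext h5.1 h5.2
  set F' : Finset (ℕ × ℕ) := (F.erase p).image (fun q => (g q.1, g q.2)) with hF'
  have hinj : Set.InjOn (fun q : ℕ × ℕ => (g q.1, g q.2)) (F.erase p) := by
    intro q hq r hr hqr
    have hq' := hno q (Finset.mem_of_mem_erase (Finset.mem_coe.1 hq))
    have hr' := hno r (Finset.mem_of_mem_erase (Finset.mem_coe.1 hr))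
    simp only [Prod.mk.injEq] at hqr
    exact Prod.ext (hginj _ _ hq'.1 hr'.1 hqr.1) (hginj _ _ hq'.2 hr'.2 hqr.2)
  have hcard' : F'.card = F.card - 1 := by
    rw [hF', Finset.card_image_of_injOn hinj, Finset.card_erase_of_mem hp]
  have hFam' : IsChordFam (n - 1) F' := by
    constructor
    · intro q' hq'
      obtain ⟨q, hq, rfl⟩ := Finset.mem_image.1 hq'
      have hqF := Finset.mem_of_mem_erase hq
      obtain ⟨hq1, hq2, hq3⟩ := hF.1 q hqF
      have hqno := hno q hqF
      rcases le_or_gt q.1 p.1 with h1 | h1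
      · rcases le_or_gt q.2 p.1 with h2 | h2
        · simp only [hg]; split_ifs <;> omega
        · have h3 : q.1 + 3 ≤ q.2 := hspan q hq h1 (by omega)
          simp only [hg]; split_ifs <;> omega
      · simp only [hg]; split_ifs <;> omega
    · intro q' hq' r' hr'
      obtain ⟨q, hq, rfl⟩ := Finset.mem_image.1 hq'
      obtain ⟨r, hr, rfl⟩ := Finset.mem_image.1 hr'
      have hqno := hno q (Finset.mem_of_mem_erase hq)
      have hrno := hno r (Finset.mem_of_mem_erase hr)
      rintro ⟨hc1, hc2, hc3⟩
      exact hF.2 q (Finset.mem_of_mem_erase hq) r (Finset.mem_of_mem_erase hr)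
        ⟨(hglt _ _ hqno.1 hrno.1).1 hc1, (hglt _ _ hrno.1 hqno.2).1 hc2,
         (hglt _ _ hqno.2 hrno.2).1 hc3⟩
  have hth := ih (n - 1) (by omega) F' hFam'
  have hpos : 1 ≤ F.card := Finset.card_pos.2 hne
  omega


set_option maxHeartbeats 1000000 in
lemma mop_ear {V : Type*} [Fintype V] (G : SimpleGraph V) (hmop : IsMOP G) :
    ∀ v, ndeg G v = 2 → ∃ u w : V, u ≠ w ∧ G.neighborSet v = {u, w} ∧ G.Adj u w := by
  classical
  obtain ⟨hn3, f, hcyc, hcross, hcount⟩ := hmop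
  revert hcount hcross hcyc f hn3
  generalize Fintype.card V = n
  intro hn3 f hcyc hcross hcount
  intro v hv
  have hv' : (G.neighborSet v).ncard = 2 := by simpa [ndeg] using hv
  set A : Finset (Fin n × Fin n) :=
    Finset.univ.filter (fun p => p.1 < p.2 ∧ G.Adj (f p.1) (f p.2)) with hAdef
  have hmemA : ∀ p : Fin n × Fin n, p ∈ A ↔ (p.1 < p.2 ∧ G.Adj (f p.1) (f p.2)) := by
    intro p; rw [hAdef]; simp [Finset.mem_filter]
  have hAcard : A.card = 2 * n - 3 := by
    have hbij : A.card = G.edgeSet.toFinset.card := by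
      apply Finset.card_bij (fun p _ => s(f p.1, f p.2))
      · intro p hp
        rw [Set.mem_toFinset]
        exact ((hmemA p).1 hp).2
      · intro p hp q hq heq
        have hp' := (hmemA p).1 hp
        have hq' := (hmemA q).1 hq
        rw [Sym2.eq_iff] at heq
        rcases heq with ⟨h1, h2⟩ | ⟨h1, h2⟩
        · exact Prod.ext (f.injective h1) (f.injective h2)
        · exfalso
          have e1 : p.1 = q.2 := f.injective h1
          have e2 : p.2 = q.1 := f.injective h2
          rw [e1, e2] at hp'
          exact absurd (lt_trans hp'.1 hq'.1) (lt_irrefl _)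
      · intro e
        induction e using Sym2.ind with
        | _ x y =>
          intro he
          rw [Set.mem_toFinset] at he
          have hadj : G.Adj x y := he
          have hne : f.symm x ≠ f.symm y := f.symm.injective.ne hadj.ne
          rcases lt_or_gt_of_ne hne with h | h
          · refine ⟨(f.symm x, f.symm y), (hmemA _).2 ⟨h, ?_⟩, ?_⟩
            · simpa using hadj
            · simp
          · refine ⟨(f.symm y, f.symm x), (hmemA _).2 ⟨h, ?_⟩, ?_⟩
            · simpa using hadj.symm
            · simp [Sym2.eq_swap]
    rw [hbij, ← Set.ncard_eq_toFinset_card', hcount]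
  set Cy : Finset (Fin n × Fin n) :=
    Finset.univ.filter
      (fun p => p.1 < p.2 ∧ (p.2.val = p.1.val + 1 ∨ (p.1.val = 0 ∧ p.2.val = n - 1)))
    with hCydef
  have hmemCy : ∀ p : Fin n × Fin n, p ∈ Cy ↔
      (p.1 < p.2 ∧ (p.2.val = p.1.val + 1 ∨ (p.1.val = 0 ∧ p.2.val = n - 1))) := by
    intro p; rw [hCydef]; simp [Finset.mem_filter]
  have hCysub : Cy ⊆ A := by
    intro p hp
    rw [hmemCy] at hp
    rw [hmemA]
    refine ⟨hp.1, ?_⟩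
    rcases hp.2 with h | h
    · exact hcyc p.1 p.2 (by rw [h]; exact (Nat.mod_eq_of_lt (h ▸ p.2.isLt)).symm)
    · refine (hcyc p.2 p.1 ?_).symm
      rw [h.1, h.2, Nat.sub_add_cancel (by omega : 1 ≤ n), Nat.mod_self]
  have hCycard : Cy.card = n := by
    have hbij : (Finset.univ : Finset (Fin n)).card = Cy.card := by
      apply Finset.card_bij (fun (i : Fin n) _ =>
        if h : i.val + 1 < n then ((i, ⟨i.val + 1, h⟩) : Fin n × Fin n)
        else (⟨0, by omega⟩, ⟨n - 1, by omega⟩))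
      · intro a _
        split_ifs with h
        · rw [hmemCy]
          exact ⟨Fin.lt_def.2 (Nat.lt_succ_self a.val), Or.inl rfl⟩
        · rw [hmemCy]
          exact ⟨Fin.lt_def.2 (show (0:ℕ) < n - 1 by omega), Or.inr ⟨rfl, rfl⟩⟩
      · intro a _ b _ heq
        split_ifs at heq with h1 h2 h2
        · exact (Prod.ext_iff.1 heq).1
        · exfalso
          have h3 := Prod.ext_iff.1 heq
          have e1 : a.val = 0 := congrArg Fin.val h3.1
          have e2 : a.val + 1 = n - 1 := congrArg Fin.val h3.2
          omega
        · exfalso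
          have h3 := Prod.ext_iff.1 heq
          have e1 : (0:ℕ) = b.val := congrArg Fin.val h3.1
          have e2 : n - 1 = b.val + 1 := congrArg Fin.val h3.2
          omega
        · have ha := a.isLt; have hb := b.isLt
          exact Fin.ext (by omega)
      · intro p hp
        rw [hmemCy] at hp
        rcases hp.2 with h | h
        · have h1 : p.1.val + 1 < n := by rw [← h]; exact p.2.isLt
          refine ⟨p.1, Finset.mem_univ _, ?_⟩
          rw [dif_pos h1]
          exact Prod.ext rfl (Fin.ext h.symm)
        · refine ⟨⟨n - 1, by omega⟩, Finset.mem_univ _, ?_⟩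
          rw [dif_neg (by omega : ¬(n - 1 + 1 < n))]
          exact Prod.ext (Fin.ext h.1.symm) (Fin.ext h.2.symm)
    rw [← hbij, Finset.card_univ, Fintype.card_fin]
  set Ch : Finset (Fin n × Fin n) := A \ Cy with hChdef
  have hChcard : Ch.card = n - 3 := by
    rw [hChdef, Finset.card_sdiff_of_subset hCysub, hAcard, hCycard]
    omega
  set F : Finset (ℕ × ℕ) := Ch.image (fun p => (p.1.val, p.2.val)) with hFdef
  have hvalinj : Function.Injective (fun p : Fin n × Fin n => (p.1.val, p.2.val)) := by
    intro p q h
    simp only [Prod.mk.injEq] at h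
    exact Prod.ext (Fin.val_injective h.1) (Fin.val_injective h.2)
  have hFcard : F.card = n - 3 := by
    rw [hFdef, Finset.card_image_of_injective _ hvalinj, hChcard]
  have hmemF' : ∀ q ∈ F, ∃ a b : Fin n, q = (a.val, b.val) ∧ G.Adj (f a) (f b) ∧
      a.val + 2 ≤ b.val ∧ b.val ≤ n - 1 ∧ ¬(a.val = 0 ∧ b.val = n - 1) := by
    intro q hq
    rw [hFdef] at hq
    obtain ⟨p, hp, rfl⟩ := Finset.mem_image.1 hq
    rw [hChdef, Finset.mem_sdiff] at hp
    obtain ⟨hpA, hpC⟩ := hp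
    rw [hmemA] at hpA
    have hnc : ¬(p.2.val = p.1.val + 1 ∨ (p.1.val = 0 ∧ p.2.val = n - 1)) := by
      intro h
      exact hpC ((hmemCy p).2 ⟨hpA.1, h⟩)
    have hnc1 : ¬(p.2.val = p.1.val + 1) := fun h => hnc (Or.inl h)
    have hnc2 : ¬(p.1.val = 0 ∧ p.2.val = n - 1) := fun h => hnc (Or.inr h)
    have hlt : p.1.val < p.2.val := hpA.1
    have h2lt := p.2.isLt
    exact ⟨p.1, p.2, rfl, hpA.2, by omega, by omega, hnc2⟩
  have hFam : IsChordFam n F := by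
    constructor
    · intro q hq
      obtain ⟨a, b, rfl, _, hb⟩ := hmemF' q hq
      exact hb
    · intro q hq r hr
      obtain ⟨a, b, rfl, hadj, _⟩ := hmemF' q hq
      obtain ⟨c, d, rfl, hadj', _⟩ := hmemF' r hr
      rintro ⟨h1, h2, h3⟩
      exact hcross a b c d h1 h2 h3 hadj hadj'
    -- the degree-2 vertex
  set i : Fin n := f.symm v with hidef
  have hfi : f i = v := f.apply_symm_apply v
  have hilt := i.isLt
  obtain ⟨j1, hj1v⟩ : ∃ j : Fin n, j.val = (i.val + 1) % n :=
    ⟨⟨_, Nat.mod_lt _ (by omega)⟩, rfl⟩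
  obtain ⟨j2, hj2v⟩ : ∃ j : Fin n, j.val = (i.val + (n - 1)) % n :=
    ⟨⟨_, Nat.mod_lt _ (by omega)⟩, rfl⟩
  have hj1val : j1.val = i.val + 1 ∨ (i.val = n - 1 ∧ j1.val = 0) := by
    rcases Nat.lt_or_ge (i.val + 1) n with h | h
    · left; rw [hj1v, Nat.mod_eq_of_lt h]
    · right
      refine ⟨by omega, ?_⟩
      rw [hj1v, (by omega : i.val + 1 = n), Nat.mod_self]
  have hj2val : (1 ≤ i.val ∧ j2.val = i.val - 1) ∨ (i.val = 0 ∧ j2.val = n - 1) := by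
    rcases Nat.eq_zero_or_pos i.val with h | h
    · right
      refine ⟨h, ?_⟩
      rw [hj2v, h, zero_add, Nat.mod_eq_of_lt (by omega)]
    · left
      refine ⟨h, ?_⟩
      rw [hj2v, (by omega : i.val + (n - 1) = (i.val - 1) + n), Nat.add_mod_right,
        Nat.mod_eq_of_lt (by omega)]
  have hadj1 : G.Adj v (f j1) := by
    have h := hcyc i j1 hj1v
    rwa [hfi] at h
  have hadj2 : G.Adj (f j2) v := by
    have hij2 : i.val = ((j2.val + 1) % n) := by
      rw [hj2v, Nat.mod_add_mod, (by omega : i.val + (n - 1) + 1 = i.val + n),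
        Nat.add_mod_right, Nat.mod_eq_of_lt hilt]
    have h := hcyc j2 i hij2
    rwa [hfi] at h
  have hne12 : j1 ≠ j2 := by
    intro h
    have hh : j1.val = j2.val := congrArg Fin.val h
    omega
  have hsub : ({f j1, f j2} : Set V) ⊆ G.neighborSet v := by
    intro x hx
    simp only [Set.mem_insert_iff, Set.mem_singleton_iff] at hx
    rcases hx with rfl | rfl
    · exact hadj1
    · exact hadj2.symm
  have hpair2 : ({f j1, f j2} : Set V).ncard = 2 := Set.ncard_pair (f.injective.ne hne12)
  have hNv : G.neighborSet v = {f j1, f j2} :=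
    (Set.eq_of_subset_of_ncard_le hsub (le_of_eq (by rw [hv', hpair2])) (Set.toFinite _)).symm
  have hNoChordAt : ∀ q ∈ F, q.1 ≠ i.val ∧ q.2 ≠ i.val := by
    intro q hq
    obtain ⟨a, b, rfl, hadj, hb1, hb2, hb3⟩ := hmemF' q hq
    constructor
    · intro h
      have ha : a = i := Fin.val_injective h
      rw [ha, hfi] at hadj
      have hbN : f b ∈ G.neighborSet v := hadj
      rw [hNv] at hbN
      simp only [Set.mem_insert_iff, Set.mem_singleton_iff] at hbN
      rcases hbN with h' | h'
      · have hbv : b.val = j1.val := congrArg Fin.val (f.injective h')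
        omega
      · have hbv : b.val = j2.val := congrArg Fin.val (f.injective h')
        omega
    · intro h
      have hb : b = i := Fin.val_injective h
      rw [hb, hfi] at hadj
      have haN : f a ∈ G.neighborSet v := hadj.symm
      rw [hNv] at haN
      simp only [Set.mem_insert_iff, Set.mem_singleton_iff] at haN
      rcases haN with h' | h'
      · have hav : a.val = j1.val := congrArg Fin.val (f.injective h')
        omega
      · have hav : a.val = j2.val := congrArg Fin.val (f.injective h')
        omega
  have hadj12 : G.Adj (f j1) (f j2) := by
    by_cases hn3' : n = 3
    · refine hcyc j1 j2 ?_
      subst hn3'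
      omega
    · have hn4 : 4 ≤ n := by omega
      by_contra hnadj
      have main : ∀ a2 b2 : ℕ,
          (a2 + 2 ≤ b2 ∧ b2 ≤ n - 1 ∧ ¬(a2 = 0 ∧ b2 = n - 1)) →
          ((a2 = j1.val ∧ b2 = j2.val) ∨ (a2 = j2.val ∧ b2 = j1.val)) →
          (∀ p1 p2 : ℕ, p1 + 2 ≤ p2 → p2 ≤ n - 1 →
            ((a2 < p1 ∧ p1 < b2 ∧ b2 < p2) ∨ (p1 < a2 ∧ a2 < p2 ∧ p2 < b2)) →
            p1 = i.val ∨ p2 = i.val) → False := by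
        intro a2 b2 hc1 hc2 hc3
        have hnotF : (a2, b2) ∉ F := by
          intro hmem
          obtain ⟨a, b, heq, hadj, _⟩ := hmemF' _ hmem
          simp only [Prod.mk.injEq] at heq
          rcases hc2 with ⟨h1, h2⟩ | ⟨h1, h2⟩
          · have ha : a = j1 := Fin.val_injective (by omega)
            have hb : b = j2 := Fin.val_injective (by omega)
            rw [ha, hb] at hadj
            exact hnadj hadj
          · have ha : a = j2 := Fin.val_injective (by omega)
            have hb : b = j1 := Fin.val_injective (by omega)
            rw [ha, hb] at hadj
            exact hnadj hadj.symm
        have hFam2 : IsChordFam n (insert (a2, b2) F) := by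
          constructor
          · intro q hq
            rcases Finset.mem_insert.1 hq with rfl | hq'
            · exact hc1
            · exact hFam.1 q hq'
          · intro q hq r hr
            rcases Finset.mem_insert.1 hq with rfl | hq' <;>
              rcases Finset.mem_insert.1 hr with rfl | hr'
            · rintro ⟨h1, h2, h3⟩
              simp only at h1 h2 h3
              omega
            · rintro ⟨h1, h2, h3⟩
              obtain ⟨hrb1, hrb2, _⟩ := hFam.1 r hr'
              have hir := hc3 r.1 r.2 hrb1 hrb2 (Or.inl ⟨h1, h2, h3⟩)
              have hno := hNoChordAt r hr'
              omega
            · rintro ⟨h1, h2, h3⟩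
              obtain ⟨hqb1, hqb2, _⟩ := hFam.1 q hq'
              have hiq := hc3 q.1 q.2 hqb1 hqb2 (Or.inr ⟨h1, h2, h3⟩)
              have hno := hNoChordAt q hq'
              omega
            · exact hFam.2 q hq' r hr'
        have hcard2 := chordFam_card_le n _ hFam2
        rw [Finset.card_insert_of_notMem hnotF, hFcard] at hcard2
        omega
      rcases hj1val with hA | hA <;> rcases hj2val with hB | hB
      · have hj1lt := j1.isLt
        refine main (i.val - 1) (i.val + 1) (by omega) (Or.inr ⟨by omega, by omega⟩) ?_
        intro p1 p2 hp1 hp2 hpat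
        omega
      · refine main 1 (n - 1) (by omega) (Or.inl ⟨by omega, by omega⟩) ?_
        intro p1 p2 hp1 hp2 hpat
        omega
      · refine main 0 (n - 2) (by omega) (Or.inl ⟨by omega, by omega⟩) ?_
        intro p1 p2 hp1 hp2 hpat
        omega
      · omega
  exact ⟨f j1, f j2, f.injective.ne hne12, hNv, hadj12⟩

end AuxZF

/-- If `G` is a MOP with at least one separator triangle whose subgraph `G_△` formed by
the separator triangles is connected, then `Z(G) ≥ ⌈n₂/2⌉` where `n₂` is the number of
vertices of degree 2. -/
theorem stmt_6 {V : Type*} [Fintype V] (G : SimpleGraph V)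
    (hmop : IsMOP G)
    (ht : ∃ T : Finset V, IsSeparatorTriangle G T)
    (hcomp : (sepSubgraph G).Connected) :
    ({v : V | ndeg G v = 2}.ncard + 1) / 2 ≤ zeroForcingNumber G := by
  classical
  have hear := mop_ear G hmop
  have hne : {m | ∃ S : Set V, S.ncard = m ∧ IsZeroForcingSet G S}.Nonempty :=
    ⟨(Set.univ : Set V).ncard, Set.univ, rfl, fun v => ZeroForce.init v (Set.mem_univ v)⟩
  obtain ⟨S, hScard, hSzfs⟩ := Nat.sInf_mem hne
  have h := ears_le_two_mul_zfs G S {v : V | ndeg G v = 2} (fun e he => hear e he) hSzfs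
  unfold zeroForcingNumber
  rw [← hScard]
  omega
end

section
/- In a ring of k ≥ 2 diamonds G, every loop zero forcing set of G has cardinality at least k + 2 = n(G)/4 + 2; in particular, no loop zero forcing set of cardinality n(G)/4 + 1 exists. -/
open SimpleGraph

variable {V : Type*}

namespace Stmt14Aux

def IsFort (G : SimpleGraph V) (F : Set V) : Prop :=
  (∀ v ∈ F, ∃ u ∈ F, G.Adj v u) ∧
  ∀ v ∉ F, ∀ u ∈ F, G.Adj v u → ∃ u' ∈ F, G.Adj v u' ∧ u' ≠ u

lemma fort_hit {G : SimpleGraph V} {S F : Set V} (hF : IsFort G F) (hne : F.Nonempty)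
    (hS : IsLoopZeroForcingSet G S) : ∃ x, x ∈ S ∧ x ∈ F := by
  by_contra h
  push_neg at h
  have key : ∀ v, LoopZeroForce G S v → v ∉ F := by
    intro v hv
    induction hv with
    | init v hv => exact h v hv
    | force v w hv hadj hall ihv ih =>
      intro hwF
      obtain ⟨u', hu'F, hadj', hne'⟩ := hF.2 v ihv w hwF hadj
      exact ih u' hadj' hne' hu'F
    | loop w hall ih =>
      intro hwF
      obtain ⟨u, huF, hadj⟩ := hF.1 w hwF
      exact ih u hadj huF
  obtain ⟨x, hx⟩ := hne
  exact key x (hS x) hx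

lemma two_nbrs {G : SimpleGraph V} {F : Set V} {v : V} (x₁ x₂ u : V)
    (h1 : x₁ ∈ F) (h2 : x₂ ∈ F) (a1 : G.Adj v x₁) (a2 : G.Adj v x₂) (hne : x₁ ≠ x₂) :
    ∃ u' ∈ F, G.Adj v u' ∧ u' ≠ u := by
  by_cases h : x₁ = u
  · exact ⟨x₂, h2, a2, fun e => hne (h.trans e.symm)⟩
  · exact ⟨x₁, h1, a1, h⟩

lemma rod_adj {k : ℕ} (p q : Fin k × Fin 4) :
    (ringOfDiamonds k).Adj p q ↔
      (p.1 = q.1 ∧ p.2 ≠ q.2 ∧ ¬(p.2 = 0 ∧ q.2 = 3) ∧ ¬(p.2 = 3 ∧ q.2 = 0)) ∨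
      (q.1.val = (p.1.val + 1) % k ∧ p.2 = 3 ∧ q.2 = 0) ∨
      (p.1.val = (q.1.val + 1) % k ∧ p.2 = 0 ∧ q.2 = 3) := by
  rw [ringOfDiamonds, SimpleGraph.fromRel_adj]
  constructor
  · rintro ⟨hne, h | h⟩
    · rcases h with ⟨h1, h2, h3⟩ | ⟨h1, h2, h3⟩
      · exact Or.inl ⟨h1, fun h2e => hne (Prod.ext h1 h2e), h2, h3⟩
      · exact Or.inr (Or.inl ⟨h1, h2, h3⟩)
    · rcases h with ⟨h1, h2, h3⟩ | ⟨h1, h2, h3⟩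
      · refine Or.inl ⟨h1.symm, fun h2e => hne (Prod.ext h1.symm h2e), ?_, ?_⟩
        · rintro ⟨ha, hb⟩; exact h3 ⟨hb, ha⟩
        · rintro ⟨ha, hb⟩; exact h2 ⟨hb, ha⟩
      · exact Or.inr (Or.inr ⟨h1, h3, h2⟩)
  · rintro (⟨h1, h2, h3, h4⟩ | ⟨h1, h2, h3⟩ | ⟨h1, h2, h3⟩)
    · exact ⟨fun he => h2 (congrArg Prod.snd he), Or.inl (Or.inl ⟨h1, h3, h4⟩)⟩
    · refine ⟨fun he => ?_, Or.inl (Or.inr ⟨h1, h2, h3⟩)⟩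
      rw [he, h3] at h2; exact absurd h2 (by decide)
    · refine ⟨fun he => ?_, Or.inr (Or.inr ⟨h1, h3, h2⟩)⟩
      rw [he, h3] at h2; exact absurd h2 (by decide)

variable {k : ℕ}

lemma fortW (hk : 2 ≤ k) (i : Fin k) :
    IsFort (ringOfDiamonds k) {p : Fin k × Fin 4 | p.1 = i ∧ (p.2 = 1 ∨ p.2 = 2)} := by
  constructor
  · rintro ⟨j, a⟩ ⟨hj, ha⟩
    simp only at hj ha
    subst hj
    rcases ha with rfl | rfl
    · exact ⟨(j, 2), ⟨rfl, Or.inr rfl⟩, by rw [rod_adj]; exact Or.inl ⟨rfl, by simp, by simp, by simp⟩⟩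
    · exact ⟨(j, 1), ⟨rfl, Or.inl rfl⟩, by rw [rod_adj]; exact Or.inl ⟨rfl, by simp, by simp, by simp⟩⟩
  · rintro ⟨j, b⟩ hnot u ⟨hu1, hu2⟩ hadj
    rw [rod_adj] at hadj
    have hji : j = i := by
      rcases hadj with ⟨h1, _⟩ | ⟨_, _, h3⟩ | ⟨_, _, h3⟩
      · rw [show ((j,b) : Fin k × Fin 4).1 = j from rfl, hu1] at h1; exact h1
      · rcases hu2 with h | h <;> rw [h3] at h <;> exact absurd h (by decide)
      · rcases hu2 with h | h <;> rw [h3] at h <;> exact absurd h (by decide)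
    subst hji
    have hb : b ≠ 1 ∧ b ≠ 2 := by
      constructor <;> intro hb <;> exact hnot ⟨rfl, by simp [hb]⟩
    refine two_nbrs (j,1) (j,2) u ⟨rfl, Or.inl rfl⟩ ⟨rfl, Or.inr rfl⟩ ?_ ?_ (by simp)
    · rw [rod_adj]; refine Or.inl ⟨rfl, ?_, ?_, ?_⟩ <;> simp only <;> fin_cases b <;> simp_all <;> decide
    · rw [rod_adj]; refine Or.inl ⟨rfl, ?_, ?_, ?_⟩ <;> simp only <;> fin_cases b <;> simp_all <;> decide

lemma adj_same (i : Fin k) {a b : Fin 4} (h : a ≠ b) (h03 : ¬(a = 0 ∧ b = 3))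
    (h30 : ¬(a = 3 ∧ b = 0)) : (ringOfDiamonds k).Adj (i, a) (i, b) := by
  rw [rod_adj]; exact Or.inl ⟨rfl, h, h03, h30⟩

lemma adj_cross [NeZero k] (hk : 2 ≤ k) (i : Fin k) :
    (ringOfDiamonds k).Adj (i, 3) (i + 1, 0) := by
  have hone : ((1 : Fin k) : ℕ) = 1 := by
    rw [Fin.val_one']; exact Nat.mod_eq_of_lt (by omega)
  rw [rod_adj]
  refine Or.inr (Or.inl ⟨?_, rfl, rfl⟩)
  show ((i + 1 : Fin k) : ℕ) = ((i : ℕ) + 1) % k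
  rw [Fin.val_add, hone]

lemma adj_cross' [NeZero k] (hk : 2 ≤ k) (i : Fin k) :
    (ringOfDiamonds k).Adj (i, 0) (i - 1, 3) := by
  have hone : ((1 : Fin k) : ℕ) = 1 := by
    rw [Fin.val_one']; exact Nat.mod_eq_of_lt (by omega)
  rw [rod_adj]
  refine Or.inr (Or.inr ⟨?_, rfl, rfl⟩)
  show (i : ℕ) = (((i - 1 : Fin k) : ℕ) + 1) % k
  have h : ((i - 1 + 1 : Fin k) : ℕ) = (((i - 1 : Fin k) : ℕ) + 1) % k := by
    rw [Fin.val_add, hone]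
  rw [sub_add_cancel] at h
  exact h

lemma snd_ne {i j : Fin k} {a b : Fin 4} (h : a ≠ b) : (i, a) ≠ (j, b) :=
  fun hx => h (congrArg Prod.snd hx)

lemma fortE (hk : 2 ≤ k) :
    IsFort (ringOfDiamonds k) {p : Fin k × Fin 4 | p.2 = 0 ∨ p.2 = 3} := by
  haveI : NeZero k := ⟨by omega⟩
  constructor
  · rintro ⟨i, a⟩ (ha | ha) <;> simp only at ha <;> subst ha
    · exact ⟨(i - 1, 3), Or.inr rfl, adj_cross' hk i⟩
    · exact ⟨(i + 1, 0), Or.inl rfl, adj_cross hk i⟩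
  · rintro ⟨i, b⟩ hnot u hu hadj
    have hb : b ≠ 0 ∧ b ≠ 3 := by
      constructor <;> intro h <;> exact hnot (by simp [h])
    refine two_nbrs (i, 0) (i, 3) u (Or.inl rfl) (Or.inr rfl) ?_ ?_ (snd_ne (by decide))
    · exact adj_same i hb.1 (fun h => hb.1 h.1) (fun h => hb.2 h.1)
    · exact adj_same i hb.2 (fun h => hb.1 h.1) (fun h => hb.2 h.1)

lemma fortA (hk : 2 ≤ k) (c : Fin k → Fin 4) (hc : ∀ i, c i = 1 ∨ c i = 2) :
    IsFort (ringOfDiamonds k) {p : Fin k × Fin 4 | p.2 = 0 ∨ p.2 = c p.1} := by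
  haveI : NeZero k := ⟨by omega⟩
  constructor
  · rintro ⟨i, a⟩ (ha | ha) <;> simp only at ha <;> subst ha
    · refine ⟨(i, c i), Or.inr rfl, ?_⟩
      rcases hc i with h | h <;> rw [h] <;>
        exact adj_same i (by decide) (by decide) (by decide)
    · refine ⟨(i, 0), Or.inl rfl, ?_⟩
      rcases hc i with h | h <;> rw [h] <;>
        exact adj_same i (by decide) (by decide) (by decide)
  · rintro ⟨i, b⟩ hnot u hu hadj
    have hb : b ≠ 0 ∧ b ≠ c i := by
      constructor <;> intro h <;> exact hnot (by simp [h])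
    by_cases hb3 : b = 3
    · subst hb3
      refine two_nbrs (i, c i) (i + 1, 0) u (Or.inr rfl) (Or.inl rfl) ?_
        (adj_cross hk i) ?_
      · rcases hc i with h | h <;> rw [h] <;>
          exact adj_same i (by decide) (by decide) (by decide)
      · intro hx
        have h2 : c i = 0 := congrArg Prod.snd hx
        rcases hc i with h | h <;> rw [h] at h2 <;> exact absurd h2 (by decide)
    · refine two_nbrs (i, 0) (i, c i) u (Or.inl rfl) (Or.inr rfl) ?_ ?_ ?_
      · exact adj_same i hb.1 (fun h => hb.1 h.1) (fun h => hb3 h.1)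
      · exact adj_same i hb.2 (fun h => hb.1 h.1) (fun h => hb3 h.1)
      · intro hx
        have h2 : (0 : Fin 4) = c i := congrArg Prod.snd hx
        rcases hc i with h | h <;> rw [h] at h2 <;> exact absurd h2 (by decide)

lemma fortY (hk : 2 ≤ k) (c : Fin k → Fin 4) (hc : ∀ i, c i = 1 ∨ c i = 2) :
    IsFort (ringOfDiamonds k) {p : Fin k × Fin 4 | p.2 = 3 ∨ p.2 = c p.1} := by
  haveI : NeZero k := ⟨by omega⟩
  constructor
  · rintro ⟨i, a⟩ (ha | ha) <;> simp only at ha <;> subst ha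
    · refine ⟨(i, c i), Or.inr rfl, ?_⟩
      rcases hc i with h | h <;> rw [h] <;>
        exact adj_same i (by decide) (by decide) (by decide)
    · refine ⟨(i, 3), Or.inl rfl, ?_⟩
      rcases hc i with h | h <;> rw [h] <;>
        exact adj_same i (by decide) (by decide) (by decide)
  · rintro ⟨i, b⟩ hnot u hu hadj
    have hb : b ≠ 3 ∧ b ≠ c i := by
      constructor <;> intro h <;> exact hnot (by simp [h])
    by_cases hb0 : b = 0
    · subst hb0
      refine two_nbrs (i, c i) (i - 1, 3) u (Or.inr rfl) (Or.inl rfl) ?_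
        (adj_cross' hk i) ?_
      · rcases hc i with h | h <;> rw [h] <;>
          exact adj_same i (by decide) (by decide) (by decide)
      · intro hx
        have h2 : c i = 3 := congrArg Prod.snd hx
        rcases hc i with h | h <;> rw [h] at h2 <;> exact absurd h2 (by decide)
    · refine two_nbrs (i, 3) (i, c i) u (Or.inl rfl) (Or.inr rfl) ?_ ?_ ?_
      · exact adj_same i hb.1 (fun h => hb0 h.1) (fun h => hb.1 h.1)
      · exact adj_same i hb.2 (fun h => hb0 h.1) (fun h => hb.1 h.1)
      · intro hx
        have h2 : (3 : Fin 4) = c i := congrArg Prod.snd hx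
        rcases hc i with h | h <;> rw [h] at h2 <;> exact absurd h2 (by decide)

lemma card_ge (S : Set (Fin k × Fin 4)) (g : Fin k → Fin k × Fin 4)
    (hgS : ∀ i, g i ∈ S) (hg1 : ∀ i, (g i).1 = i) {e p : Fin k × Fin 4}
    (he : e ∈ S) (hp : p ∈ S) (hep : e ≠ p) (heg : ∀ i, e ≠ g i) (hpg : ∀ i, p ≠ g i) :
    k + 2 ≤ S.ncard := by
  classical
  have hginj : Function.Injective g := fun a b hab => by rw [← hg1 a, ← hg1 b, hab]
  set T : Finset (Fin k × Fin 4) := insert e (insert p (Finset.image g Finset.univ)) with hT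
  have hpmem : p ∉ Finset.image g Finset.univ := by
    simp only [Finset.mem_image, Finset.mem_univ, true_and, not_exists]
    exact fun i h => hpg i h.symm
  have hemem : e ∉ insert p (Finset.image g Finset.univ) := by
    simp only [Finset.mem_insert, Finset.mem_image, Finset.mem_univ, true_and, not_or, not_exists]
    exact ⟨hep, fun i h => heg i h.symm⟩
  have hcard : T.card = k + 2 := by
    rw [hT, Finset.card_insert_of_notMem hemem, Finset.card_insert_of_notMem hpmem,
      Finset.card_image_of_injective _ hginj, Finset.card_univ, Fintype.card_fin]
  have hsub : (T : Set (Fin k × Fin 4)) ⊆ S := by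
    intro x hx
    simp only [hT, Finset.coe_insert, Set.mem_insert_iff, Finset.coe_image,
      Finset.coe_univ, Set.image_univ, Set.mem_range] at hx
    rcases hx with rfl | rfl | ⟨i, rfl⟩
    · exact he
    · exact hp
    · exact hgS i
  calc k + 2 = (T : Set (Fin k × Fin 4)).ncard := by rw [Set.ncard_coe_finset, hcard]
    _ ≤ S.ncard := Set.ncard_le_ncard hsub (Set.toFinite S)



lemma main_bound (hk : 2 ≤ k) (S : Set (Fin k × Fin 4))
    (hS : IsLoopZeroForcingSet (ringOfDiamonds k) S) : k + 2 ≤ S.ncard := by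
  haveI : NeZero k := ⟨by omega⟩
  -- one interior vertex per diamond
  have hW : ∀ i : Fin k, ∃ x, x ∈ S ∧ x.1 = i ∧ (x.2 = 1 ∨ x.2 = 2) := by
    intro i
    obtain ⟨x, hxS, hx⟩ := fort_hit (fortW hk i) ⟨(i, 1), rfl, Or.inl rfl⟩ hS
    exact ⟨x, hxS, hx⟩
  choose g hgS hg1 hg2 using hW
  -- a vertex of the outer ring
  obtain ⟨e, heS, he2⟩ := fort_hit (fortE hk) ⟨((0 : Fin k), 0), Or.inl rfl⟩ hS
  have heg : ∀ i, e ≠ g i := by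
    intro i h
    rcases he2 with h0 | h0 <;> rcases hg2 i with h1 | h1 <;> rw [h, h1] at h0 <;>
      exact absurd h0 (by decide)
  by_contra hcard
  push_neg at hcard
  -- uniqueness outside diamond e.1
  have uniq : ∀ p, p ∈ S → p.1 ≠ e.1 → p = g p.1 := by
    intro p hpS hpj
    by_contra hne
    have hpg : ∀ i, p ≠ g i := by
      intro i h
      by_cases hip : i = p.1
      · exact hne (hip ▸ h)
      · exact hip ((congrArg Prod.fst h).trans (hg1 i)).symm
    have hep : e ≠ p := fun h => hpj (congrArg Prod.fst h).symm
    exact absurd (card_ge S g hgS hg1 heS hpS hep heg hpg) (by omega)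
  -- uniqueness inside diamond e.1
  have uniqj : ∀ p, p ∈ S → p.1 = e.1 → p = e ∨ p = g e.1 := by
    intro p hpS hpj
    by_contra hne
    push_neg at hne
    have hpg : ∀ i, p ≠ g i := by
      intro i h
      by_cases hip : i = e.1
      · exact hne.2 (hip ▸ h)
      · exact hip (((congrArg Prod.fst h).trans (hg1 i)).symm.trans hpj)
    exact absurd (card_ge S g hgS hg1 heS hpS (Ne.symm hne.1) heg hpg) (by omega)
  -- the complementary interior choice
  set c : Fin k → Fin 4 := fun i => if (g i).2 = 1 then 2 else 1 with hcdef
  have hc : ∀ i, c i = 1 ∨ c i = 2 := by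
    intro i
    by_cases h : (g i).2 = 1 <;> simp [hcdef, h]
  have hcne : ∀ i, c i ≠ (g i).2 := by
    intro i h
    rcases hg2 i with h1 | h1 <;> rw [h1] at h <;> simp [hcdef, h1] at h
  -- a vertex of S matches g on every diamond it lies in (other than via e)
  have hgq : ∀ (q : Fin k × Fin 4), q = g q.1 → ¬(q.2 = 3 ∨ q.2 = c q.1) := by
    rintro q h (h2 | h2)
    · have h3 : (g q.1).2 = 3 := (congrArg Prod.snd h).symm.trans h2
      rcases hg2 q.1 with h1 | h1 <;> rw [h1] at h3 <;> exact absurd h3 (by decide)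
    · exact hcne q.1 (h2.symm.trans (congrArg Prod.snd h))
  have hgq' : ∀ (q : Fin k × Fin 4), q = g q.1 → ¬(q.2 = 0 ∨ q.2 = c q.1) := by
    rintro q h (h2 | h2)
    · have h3 : (g q.1).2 = 0 := (congrArg Prod.snd h).symm.trans h2
      rcases hg2 q.1 with h1 | h1 <;> rw [h1] at h3 <;> exact absurd h3 (by decide)
    · exact hcne q.1 (h2.symm.trans (congrArg Prod.snd h))
  rcases he2 with he0 | he3
  · -- e.2 = 0 : use the Y-fort
    obtain ⟨q, hqS, hq2⟩ := fort_hit (fortY hk c hc) ⟨(e.1, 3), Or.inl rfl⟩ hS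
    by_cases hq : q.1 = e.1
    · rcases uniqj q hqS hq with h | h
      · have hqe : q.2 = e.2 := congrArg Prod.snd h
        rcases hq2 with h2 | h2
        · rw [hqe, he0] at h2; exact absurd h2 (by decide)
        · have h3 : (0 : Fin 4) = c q.1 := (he0.symm.trans hqe.symm).trans h2
          rcases hc q.1 with h1 | h1 <;> rw [h1] at h3 <;> exact absurd h3 (by decide)
      · exact hgq q (by rw [hq]; exact h) hq2
    · exact hgq q (uniq q hqS hq) hq2
  · -- e.2 = 3 : use the A-fort
    obtain ⟨q, hqS, hq2⟩ := fort_hit (fortA hk c hc) ⟨(e.1, 0), Or.inl rfl⟩ hS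
    by_cases hq : q.1 = e.1
    · rcases uniqj q hqS hq with h | h
      · have hqe : q.2 = e.2 := congrArg Prod.snd h
        rcases hq2 with h2 | h2
        · rw [hqe, he3] at h2; exact absurd h2 (by decide)
        · have h3 : (3 : Fin 4) = c q.1 := (he3.symm.trans hqe.symm).trans h2
          rcases hc q.1 with h1 | h1 <;> rw [h1] at h3 <;> exact absurd h3 (by decide)
      · exact hgq' q (by rw [hq]; exact h) hq2
    · exact hgq' q (uniq q hqS hq) hq2

end Stmt14Aux

/-- In a ring of `k ≥ 2` diamonds, every loop zero forcing set has cardinality at least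
`k + 2 = n(G)/4 + 2`; in particular there is no loop zero forcing set of cardinality
`n(G)/4 + 1`. -/
theorem stmt_14 (k : ℕ) (hk : 2 ≤ k) :
    (∀ S : Set (Fin k × Fin 4), IsLoopZeroForcingSet (ringOfDiamonds k) S →
      k + 2 ≤ S.ncard) ∧
    (k + 2 = Fintype.card (Fin k × Fin 4) / 4 + 2) ∧
    ¬ ∃ S : Set (Fin k × Fin 4), IsLoopZeroForcingSet (ringOfDiamonds k) S ∧
      S.ncard = Fintype.card (Fin k × Fin 4) / 4 + 1 := by
  refine ⟨fun S hS => Stmt14Aux.main_bound hk S hS, ?_, ?_⟩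
  · rw [Fintype.card_prod, Fintype.card_fin, Fintype.card_fin]
    omega
  · rintro ⟨S, hS, hcard⟩
    have := Stmt14Aux.main_bound hk S hS
    rw [Fintype.card_prod, Fintype.card_fin, Fintype.card_fin] at hcard
    omega
end
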